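/- arXiv:1008.2250 — 7 statements merged into one kernel-verified Lean document; each statement's English description precedes it below -/
import Mathlib

section
/- Let G be a graph and s a non-negative integer. If the square graph G² has a proper integer colouring in which every edge of G has span at most s, then G² is (2s+1)-colourable. -/
/-- The square of a graph: two distinct vertices are adjacent if they are
adjacent in `G` or have a common neighbour in `G`. -/
def SimpleGraph.square' {V : Type*} (G : SimpleGraph V) : SimpleGraph V where
  Adj u v := u ≠ v ∧ (G.Adj u v ∨ ∃ w, G.Adj u w ∧ G.Adj w v)
  symm := ⟨fun u v => by
    rintro ⟨hne, h | ⟨w, h1, h2⟩⟩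
    · exact ⟨hne.symm, Or.inl h.symm⟩
    · exact ⟨hne.symm, Or.inr ⟨w, h2.symm, h1.symm⟩⟩⟩
  loopless := ⟨fun u => by rintro ⟨hne, -⟩; exact hne rfl⟩

theorem square_span_colouring {V : Type*} (G : SimpleGraph V) (s : ℕ)
    (c : V → ℤ) (hc : ∀ v w, G.square'.Adj v w → c v ≠ c w)
    (hspan : ∀ v w, G.Adj v w → |c v - c w| ≤ (s : ℤ)) :
    G.square'.chromaticNumber ≤ (2 * s + 1 : ℕ) := by
  have hpos : 0 < 2 * s + 1 := Nat.succ_pos _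
  have C : G.square'.Coloring (ZMod (2 * s + 1)) := by
    refine SimpleGraph.Coloring.mk (fun v => ((c v : ZMod (2 * s + 1)))) ?_
    intro v w hadj heq
    have hne : c v ≠ c w := hc v w hadj
    have hdvd : ((2 * s + 1 : ℕ) : ℤ) ∣ c v - c w := by
      exact ((ZMod.intCast_eq_intCast_iff (c v) (c w) (2 * s + 1)).mp heq).symm.dvd
    have hbound : |c v - c w| ≤ 2 * (s : ℤ) := by
      obtain ⟨-, h | ⟨u, h1, h2⟩⟩ := (show v ≠ w ∧ (G.Adj v w ∨ ∃ u, G.Adj v u ∧ G.Adj u w) from hadj)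
      · have := hspan v w h
        have : (s : ℤ) ≤ 2 * s := by omega
        omega
      · have h1 := hspan v u h1
        have h2 := hspan u w h2
        have := abs_sub_abs_le_abs_sub (c v - c u) (c w - c u)
        have habs : |c v - c w| ≤ |c v - c u| + |c u - c w| := by
          calc |c v - c w| = |(c v - c u) + (c u - c w)| := by ring_nf
            _ ≤ |c v - c u| + |c u - c w| := abs_add_le _ _
        omega
    have : c v - c w = 0 := by
      refine Int.eq_zero_of_abs_lt_dvd hdvd ?_
      push_cast
      omega
    omega
  haveI : Fintype (ZMod (2 * s + 1)) := ZMod.fintype _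
  calc G.square'.chromaticNumber ≤ Fintype.card (ZMod (2 * s + 1)) :=
        C.colorable.chromaticNumber_le
    _ = (2 * s + 1 : ℕ) := by rw [ZMod.card]
end

section
/- For every finite tree T with at least one edge and every non-negative integer s, the square T² has a proper integer colouring c such that every edge vw of T satisfies s+1 ≤ |c(v) − c(w)| ≤ s + ⌈Δ(T)/2⌉, where Δ(T) is the maximum degree of T. -/
open Finset SimpleGraph

universe u

private lemma exists_leaf {V : Type u} [Fintype V] (T : SimpleGraph V) [DecidableRel T.Adj]
    (hT : T.IsTree) (h2 : 1 < Fintype.card V) : ∃ u, T.degree u = 1 := by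
  classical
  by_contra h
  push_neg at h
  have hpos : ∀ v : V, 1 ≤ T.degree v := by
    intro v
    obtain ⟨w, hw⟩ := Fintype.exists_ne_of_one_lt_card h2 v
    obtain ⟨wk⟩ := hT.isConnected.preconnected v w
    cases wk with
    | nil => exact absurd rfl hw
    | cons hadj _ =>
      rw [Nat.one_le_iff_ne_zero, ← Nat.pos_iff_ne_zero]
      exact T.degree_pos_iff_exists_adj v |>.mpr ⟨_, hadj⟩
  have h2le : ∀ v : V, 2 ≤ T.degree v := by
    intro v; have := hpos v; have := h v; omega
  have hsum := T.sum_degrees_eq_twice_card_edges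
  have hcard := hT.card_edgeFinset
  have hge : 2 * Fintype.card V ≤ ∑ v, T.degree v := by
    calc 2 * Fintype.card V = ∑ _v : V, 2 := by
          rw [Finset.sum_const, Finset.card_univ, smul_eq_mul, mul_comm]
      _ ≤ ∑ v, T.degree v := Finset.sum_le_sum (fun i _ => h2le i)
  omega

private lemma reach_del {V : Type u} {T : SimpleGraph V} {u p : V}
    (hup : ∀ x, T.Adj u x → x = p) :
    ∀ (n : ℕ) (a b : V) (w : T.Walk a b), w.length ≤ n → ∀ (ha : a ≠ u) (hb : b ≠ u),
      (T.induce {x | x ≠ u}).Reachable ⟨a, ha⟩ ⟨b, hb⟩ := by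
  intro n
  induction n with
  | zero =>
    intro a b w hlen ha hb
    cases w with
    | nil => exact Reachable.refl _
    | cons h w' => simp at hlen
  | succ n ih =>
    intro a b w hlen ha hb
    cases w with
    | nil => exact Reachable.refl _
    | @cons a x b hax w' =>
      by_cases hx : x = u
      · subst hx
        cases w' with
        | nil => exact absurd rfl hb
        | @cons u y b huy w'' =>
          have hyp : y = p := hup y huy
          have hap : a = p := hup a hax.symm
          have hay : y = a := by rw [hap, hyp]
          subst hay
          refine ih y b w'' ?_ ha hb
          simp only [SimpleGraph.Walk.length_cons] at hlen
          omega
      · have h1 : (T.induce {x | x ≠ u}).Adj ⟨a, ha⟩ ⟨x, hx⟩ := hax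
        refine (h1.reachable).trans (ih x b w' ?_ hx hb)
        simp only [SimpleGraph.Walk.length_cons] at hlen
        omega

private lemma trivial_col {V : Type u} [Fintype V] (T : SimpleGraph V)
    (h1 : Fintype.card V ≤ 1) (s k : ℕ) :
    ∃ c : V → ℤ, (∀ v w, T.square'.Adj v w → c v ≠ c w) ∧
      ∀ v w, T.Adj v w → (s : ℤ) + 1 ≤ |c v - c w| ∧ |c v - c w| ≤ (s : ℤ) + (k : ℤ) :=
  ⟨fun _ => 0,
   fun v w hvw => absurd (Fintype.card_le_one_iff.mp h1 v w) hvw.1,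
   fun v w hvw => absurd (Fintype.card_le_one_iff.mp h1 v w) hvw.ne⟩

private lemma tree_aux : ∀ (n : ℕ) {V : Type u} [Fintype V] (T : SimpleGraph V)
    [DecidableRel T.Adj], Fintype.card V ≤ n → T.IsTree → ∀ (s k : ℕ), T.maxDegree ≤ 2 * k →
    ∃ c : V → ℤ, (∀ v w, T.square'.Adj v w → c v ≠ c w) ∧
      ∀ v w, T.Adj v w → (s : ℤ) + 1 ≤ |c v - c w| ∧ |c v - c w| ≤ (s : ℤ) + (k : ℤ) := by
  intro n
  induction n with
  | zero =>
    intro V _ T _ hcard hT s k hk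
    exact trivial_col T (by omega) s k
  | succ n ih =>
    intro V instF T instD hcard hT s k hk
    classical
    by_cases h1 : Fintype.card V ≤ 1
    · exact trivial_col T h1 s k
    push_neg at h1
    obtain ⟨u, hu⟩ := exists_leaf T hT h1
    obtain ⟨p, hp⟩ := Finset.card_eq_one.mp
      (by rw [T.card_neighborFinset_eq_degree]; exact hu)
    have hpu : T.Adj u p := by
      rw [← SimpleGraph.mem_neighborFinset, hp]; exact Finset.mem_singleton_self p
    have hup : ∀ x, T.Adj u x → x = p := by
      intro x hx
      have hmem : x ∈ T.neighborFinset u := (SimpleGraph.mem_neighborFinset _ _ _).mpr hx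
      rw [hp] at hmem
      exact Finset.mem_singleton.mp hmem
    have hpne : p ≠ u := hpu.ne'
    set S : Set V := {x | x ≠ u} with hS
    set T' : SimpleGraph S := T.induce S with hT'def
    haveI instD' : DecidableRel T'.Adj := fun a b => instD a.1 b.1
    have hconn : T'.Connected := by
      haveI : Nonempty ↥S := ⟨⟨p, hpne⟩⟩
      refine ⟨?_⟩
      rintro ⟨a, ha⟩ ⟨b, hb⟩
      obtain ⟨w⟩ := hT.isConnected.preconnected a b
      exact reach_del hup w.length a b w le_rfl ha hb
    have hacy : T'.IsAcyclic := by
      intro v c hc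
      exact hT.IsAcyclic (c.map (SimpleGraph.Embedding.induce S).toHom)
        ((SimpleGraph.Walk.map_isCycle_iff_of_injective Subtype.val_injective).mpr hc)
    have hT' : T'.IsTree := ⟨hconn, hacy⟩
    have hdeg : T'.maxDegree ≤ 2 * k := by
      apply SimpleGraph.maxDegree_le_of_forall_degree_le
      intro v
      have hle : T'.degree v ≤ T.degree v.1 := by
        rw [← SimpleGraph.card_neighborFinset_eq_degree,
          ← SimpleGraph.card_neighborFinset_eq_degree]
        apply Finset.card_le_card_of_injOn (fun x => x.1)
        · intro x hx
          rw [Finset.mem_coe, SimpleGraph.mem_neighborFinset] at hx ⊢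
          exact hx
        · exact fun a _ b _ hab => Subtype.ext hab
      exact le_trans hle (le_trans (T.degree_le_maxDegree v.1) hk)
    have hcard' : Fintype.card S ≤ n := by
      have hlt : Fintype.card S < Fintype.card V :=
        Fintype.card_subtype_lt (x := u) (by simp [S])
      omega
    obtain ⟨c', hc'1, hc'2⟩ := ih T' hcard' hT' s k hdeg
    set cp : ℤ := c' ⟨p, hpne⟩ with hcp
    set offs : Finset ℤ :=
      Finset.Icc ((s : ℤ) + 1) ((s : ℤ) + k) ∪
        (Finset.Icc ((s : ℤ) + 1) ((s : ℤ) + k)).image (fun x => -x) with hoffs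
    have hoffs_mem : ∀ o ∈ offs, (s : ℤ) + 1 ≤ |o| ∧ |o| ≤ (s : ℤ) + k := by
      intro o ho
      rw [hoffs, Finset.mem_union] at ho
      rcases ho with ho | ho
      · rw [Finset.mem_Icc] at ho
        rcases abs_cases o with ⟨he, h0⟩ | ⟨he, h0⟩ <;> rw [he] <;> omega
      · rw [Finset.mem_image] at ho
        obtain ⟨x, hx, rfl⟩ := ho
        rw [Finset.mem_Icc] at hx
        rcases abs_cases (-x) with ⟨he, h0⟩ | ⟨he, h0⟩ <;> rw [he] <;> omega
    have hIcc_card : (Finset.Icc ((s : ℤ) + 1) ((s : ℤ) + k)).card = k := by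
      rw [Int.card_Icc]; omega
    have hcard_offs : offs.card = 2 * k := by
      rw [hoffs, Finset.card_union_of_disjoint, hIcc_card,
        Finset.card_image_of_injective _ neg_injective, hIcc_card]
      · omega
      · rw [Finset.disjoint_left]
        intro a ha hb
        rw [Finset.mem_Icc] at ha
        rw [Finset.mem_image] at hb
        obtain ⟨x, hx, hxa⟩ := hb
        rw [Finset.mem_Icc] at hx
        omega
    set g : V → ℤ := fun x => if h : x = u then 0 else c' ⟨x, h⟩ with hg
    set F : Finset ℤ := ((T.neighborFinset p).erase u).image g with hF
    have hFcard : F.card < 2 * k := by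
      have h2 : ((T.neighborFinset p).erase u).card = T.degree p - 1 := by
        rw [Finset.card_erase_of_mem, T.card_neighborFinset_eq_degree]
        exact (SimpleGraph.mem_neighborFinset _ _ _).mpr hpu.symm
      have h3 : 1 ≤ T.degree p := by
        rw [← SimpleGraph.card_neighborFinset_eq_degree]
        exact Finset.card_pos.mpr ⟨u, (SimpleGraph.mem_neighborFinset _ _ _).mpr hpu.symm⟩
      have h4 := T.degree_le_maxDegree p
      have h5 := Finset.card_image_le (s := (T.neighborFinset p).erase u) (f := g)
      have h6 : F.card = (((T.neighborFinset p).erase u).image g).card := by rw [hF]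
      omega
    have hex : ∃ o ∈ offs, cp + o ∉ F := by
      by_contra hcon
      push_neg at hcon
      have hsub : offs.image (fun o => cp + o) ⊆ F := by
        intro a ha
        obtain ⟨o, ho, rfl⟩ := Finset.mem_image.mp ha
        exact hcon o ho
      have hle := Finset.card_le_card hsub
      rw [Finset.card_image_of_injective _ (add_right_injective cp)] at hle
      omega
    obtain ⟨o, ho, hno⟩ := hex
    set c : V → ℤ := fun v => if h : v = u then cp + o else c' ⟨v, h⟩ with hc
    refine ⟨c, ?_, ?_⟩
    · -- square colouring
      intro v w hvw
      obtain ⟨hne, hcase⟩ := hvw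
      have key : ∀ z (hz : z ≠ u), (T.Adj u z ∨ ∃ x, T.Adj u x ∧ T.Adj x z) →
          (cp + o : ℤ) ≠ c' ⟨z, hz⟩ := by
        intro z hz hcs
        rcases hcs with h | ⟨x, h1, h2⟩
        · have hzp : z = p := hup z h
          have he : (⟨z, hz⟩ : S) = ⟨p, hpne⟩ := Subtype.ext hzp
          rw [he, ← hcp]
          have hb := (hoffs_mem o ho).1
          intro hcontra
          have ho0 : o = 0 := by omega
          rw [ho0] at hb
          simp at hb
          omega
        · have hx : x = p := hup x h1
          have hmem : c' ⟨z, hz⟩ ∈ F := by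
            rw [hF]
            refine Finset.mem_image.mpr ⟨z, Finset.mem_erase.mpr ⟨hz, ?_⟩, ?_⟩
            · rw [← hx]; exact (SimpleGraph.mem_neighborFinset _ _ _).mpr h2
            · rw [hg]; exact dif_neg hz
          exact fun hcontra => hno (by rw [hcontra]; exact hmem)
      by_cases hv : v = u
      · have hw : w ≠ u := fun h => hne (by rw [hv, h])
        simp only [hc]
        rw [dif_pos hv, dif_neg hw]
        rw [hv] at hcase
        exact key w hw hcase
      · by_cases hw : w = u
        · simp only [hc]
          rw [dif_neg hv, dif_pos hw]
          rw [hw] at hcase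
          refine (key v hv ?_).symm
          rcases hcase with h | ⟨x, hx1, hx2⟩
          · exact Or.inl h.symm
          · exact Or.inr ⟨x, hx2.symm, hx1.symm⟩
        · simp only [hc]
          rw [dif_neg hv, dif_neg hw]
          apply hc'1 ⟨v, hv⟩ ⟨w, hw⟩
          refine ⟨fun hcontra => hne (congrArg Subtype.val hcontra), ?_⟩
          rcases hcase with h | ⟨x, h1, h2⟩
          · exact Or.inl h
          · by_cases hx : x = u
            · rw [hx] at h1 h2
              have hvp : v = p := hup v h1.symm
              have hwp : w = p := hup w h2
              exact absurd (hvp.trans hwp.symm) hne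
            · exact Or.inr ⟨⟨x, hx⟩, h1, h2⟩
    · -- edge bounds
      intro v w hvw
      by_cases hv : v = u
      · have hadj : T.Adj u w := by rw [← hv]; exact hvw
        have hwp : w = p := hup w hadj
        have hwne : w ≠ u := hadj.ne'
        simp only [hc]
        rw [dif_pos hv, dif_neg hwne]
        have he : (⟨w, hwne⟩ : S) = ⟨p, hpne⟩ := Subtype.ext hwp
        rw [he, ← hcp, add_sub_cancel_left]
        exact hoffs_mem o ho
      · by_cases hw : w = u
        · have hadj : T.Adj u v := by rw [← hw]; exact hvw.symm
          have hvp : v = p := hup v hadj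
          have hvne : v ≠ u := hadj.ne'
          simp only [hc]
          rw [dif_neg hvne, dif_pos hw]
          have he : (⟨v, hvne⟩ : S) = ⟨p, hpne⟩ := Subtype.ext hvp
          rw [he, ← hcp]
          have habs : |cp - (cp + o)| = |o| := by
            rw [abs_sub_comm, add_sub_cancel_left]
          rw [habs]
          exact hoffs_mem o ho
        · simp only [hc]
          rw [dif_neg hv, dif_neg hw]
          exact hc'2 ⟨v, hv⟩ ⟨w, hw⟩ hvw

theorem tree_square_span_colouring {V : Type*} [Fintype V]
    (T : SimpleGraph V) [DecidableRel T.Adj]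
    (hT : T.IsTree) (hE : T.edgeSet.Nonempty) (s : ℕ) :
    ∃ c : V → ℤ, (∀ v w, T.square'.Adj v w → c v ≠ c w) ∧
      ∀ v w, T.Adj v w →
        (s : ℤ) + 1 ≤ |c v - c w| ∧
        |c v - c w| ≤ (s : ℤ) + ((T.maxDegree + 1) / 2 : ℕ) := by
  exact tree_aux (Fintype.card V) T le_rfl hT s ((T.maxDegree + 1) / 2) (by omega)
end

section
/- Let T₁,…,T_d be finite trees, each with at least one edge, and let G = T₁ □ ⋯ □ T_d. Then χ(G²) ≤ 1 + 2 Σ_{i=1}^d ⌈Δ(T_i)/2⌉. -/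
/-- The cartesian product of a family of graphs. -/
def boxProdPi {d : ℕ} {V : Fin d → Type*} (G : ∀ i, SimpleGraph (V i)) :
    SimpleGraph (∀ i, V i) where
  Adj u v := ∃ i, (G i).Adj (u i) (v i) ∧ ∀ j, j ≠ i → u j = v j
  symm := ⟨fun u v => by
    rintro ⟨i, h, hj⟩
    exact ⟨i, h.symm, fun j hji => (hj j hji).symm⟩⟩
  loopless := ⟨fun u => by rintro ⟨i, h, -⟩; exact (G i).loopless.irrefl _ h⟩


open SimpleGraph

namespace TreeSqAux

variable {V : Type*}

section TreeLemmas

variable {T : SimpleGraph V}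

lemma dist_add_one_le_of_mem_support {u v x : V} (W : T.Walk u v) (hx : x ∈ W.support)
    (hne : x ≠ u) : T.dist x v + 1 ≤ W.length := by
  classical
  have hspec := W.take_spec hx
  have hlen : (W.takeUntil x hx).length + (W.dropUntil x hx).length = W.length := by
    rw [← Walk.length_append, hspec]
  have h1 : 1 ≤ (W.takeUntil x hx).length :=
    Nat.one_le_iff_ne_zero.mpr (fun h0 => hne (Walk.eq_of_length_eq_zero h0).symm)
  have h2 : T.dist x v ≤ (W.dropUntil x hx).length := dist_le _
  omega

lemma adj_dist_cases (hT : T.IsTree) (r : V) {v u : V} (h : T.Adj v u) :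
    T.dist u r + 1 = T.dist v r ∨ T.dist v r + 1 = T.dist u r := by
  have hc := hT.isConnected
  have hvu : T.dist v u = 1 := dist_eq_one_iff_adj.mpr h
  have huv : T.dist u v = 1 := dist_eq_one_iff_adj.mpr h.symm
  have t1 : T.dist v r ≤ T.dist v u + T.dist u r := hc.dist_triangle
  have t2 : T.dist u r ≤ T.dist u v + T.dist v r := hc.dist_triangle
  suffices hne : T.dist u r ≠ T.dist v r by omega
  intro heq
  obtain ⟨P, hP, hPl⟩ := hc.exists_path_of_dist u r
  by_cases hv : v ∈ P.support
  · have := dist_add_one_le_of_mem_support P hv h.ne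
    omega
  · have hQ : (Walk.cons h P).IsPath := by rw [Walk.cons_isPath_iff]; exact ⟨hP, hv⟩
    obtain ⟨Q, hQp, hQl⟩ := hc.exists_path_of_dist v r
    obtain ⟨W, -, hu⟩ := hT.existsUnique_path v r
    have heqw : Walk.cons h P = Q := by rw [hu _ hQ, hu _ hQp]
    have hl : (Walk.cons h P).length = Q.length := by rw [heqw]
    simp only [Walk.length_cons] at hl
    omega

lemma parent_exists (hT : T.IsTree) (r : V) {v : V} (hv : T.dist v r ≠ 0) :
    ∃ u, T.Adj v u ∧ T.dist u r + 1 = T.dist v r := by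
  obtain ⟨P, hP, hPl⟩ := hT.isConnected.exists_path_of_dist v r
  cases P with
  | nil => simp only [Walk.length_nil] at hPl; exact absurd hPl.symm hv
  | @cons _ u _ h P' =>
    refine ⟨u, h, ?_⟩
    have h1 : T.dist u r ≤ P'.length := dist_le _
    have h2 : T.dist v r ≤ T.dist v u + T.dist u r := hT.isConnected.dist_triangle
    have hvu : T.dist v u = 1 := dist_eq_one_iff_adj.mpr h
    simp only [Walk.length_cons] at hPl
    omega

lemma parent_unique (hT : T.IsTree) (r : V) {p a b : V} (ha : T.Adj p a) (hb : T.Adj p b)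
    (hda : T.dist a r + 1 = T.dist p r) (hdb : T.dist b r + 1 = T.dist p r) : a = b := by
  obtain ⟨Pa, hPa, hPal⟩ := hT.isConnected.exists_path_of_dist a r
  obtain ⟨Pb, hPb, hPbl⟩ := hT.isConnected.exists_path_of_dist b r
  have hpa : p ∉ Pa.support := fun hmem => by
    have := dist_add_one_le_of_mem_support Pa hmem ha.ne
    omega
  have hpb : p ∉ Pb.support := fun hmem => by
    have := dist_add_one_le_of_mem_support Pb hmem hb.ne
    omega
  have hA : (Walk.cons ha Pa).IsPath := by rw [Walk.cons_isPath_iff]; exact ⟨hPa, hpa⟩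
  have hB : (Walk.cons hb Pb).IsPath := by rw [Walk.cons_isPath_iff]; exact ⟨hPb, hpb⟩
  obtain ⟨W, -, hu⟩ := hT.existsUnique_path p r
  have heqw : Walk.cons ha Pa = Walk.cons hb Pb := by rw [hu _ hA, hu _ hB]
  have := congrArg (fun w : T.Walk p r => w.getVert 1) heqw
  simpa [Walk.getVert_cons_succ, Walk.getVert_zero] using this

end TreeLemmas

/-- allowed label values: integers with natAbs in (m, m+k]. -/
noncomputable def allowed (k m : ℕ) : Finset ℤ :=
  (Finset.Ioc (m : ℤ) (m + k)) ∪ (Finset.Ioc (m : ℤ) (m + k)).image (fun x => -x)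

lemma mem_allowed {k m : ℕ} {y : ℤ} :
    y ∈ allowed k m ↔ m < y.natAbs ∧ y.natAbs ≤ m + k := by
  simp only [allowed, Finset.mem_union, Finset.mem_image, Finset.mem_Ioc]
  constructor
  · rintro (⟨h1, h2⟩ | ⟨x, ⟨h1, h2⟩, rfl⟩) <;> omega
  · rintro ⟨h1, h2⟩
    rcases le_or_gt 0 y with hy | hy
    · left; omega
    · right; exact ⟨-y, by omega, by omega⟩

lemma card_allowed (k m : ℕ) : (allowed k m).card = 2 * k := by
  rw [allowed, Finset.card_union_of_disjoint, Finset.card_image_of_injective _ neg_injective]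
  · have : (Finset.Ioc (m : ℤ) (m + k)).card = k := by
      rw [Int.card_Ioc]; omega
    omega
  · rw [Finset.disjoint_left]
    rintro a ha hb
    simp only [Finset.mem_image, Finset.mem_Ioc] at ha hb
    obtain ⟨x, hx, rfl⟩ := hb
    omega

section Construction

variable (T : SimpleGraph V) [Fintype V] [DecidableEq V] [DecidableRel T.Adj]
  (dep : V → ℕ) (k m : ℕ)

/-- children of `p` w.r.t. depth function `dep`. -/
def childSet (p : V) : Finset V := (T.neighborFinset p).filter (fun u => dep u = dep p + 1)

noncomputable def chEmb (p : V) (x : ℤ) : childSet T dep p → ℤ :=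
  haveI : Decidable (Nonempty ((childSet T dep p : Finset V) ↪
      ((allowed k m).erase (-x) : Finset ℤ))) := Classical.propDecidable _
  if h : Nonempty ((childSet T dep p : Finset V) ↪ ((allowed k m).erase (-x) : Finset ℤ)) then
    fun c => ((Classical.choice h) c : ℤ)
  else fun _ => 0

lemma chEmb_spec (p : V) (x : ℤ)
    (hcard : (childSet T dep p).card ≤ ((allowed k m).erase (-x)).card) :
    Function.Injective (chEmb T dep k m p x) ∧
      ∀ c, chEmb T dep k m p x c ∈ (allowed k m).erase (-x) := by
  have h : Nonempty ((childSet T dep p : Finset V) ↪ ((allowed k m).erase (-x) : Finset ℤ)) :=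
    Function.Embedding.nonempty_of_card_le (by simpa [Fintype.card_coe] using hcard)
  haveI : Decidable (Nonempty ((childSet T dep p : Finset V) ↪
      ((allowed k m).erase (-x) : Finset ℤ))) := Classical.propDecidable _
  rw [chEmb, dif_pos h]
  refine ⟨fun a b hab => (Classical.choice h).injective (Subtype.val_injective hab), fun c => ?_⟩
  exact ((Classical.choice h) c).2

variable (par : V → V)

noncomputable def lab (Hpar : ∀ v, dep v ≠ 0 → dep (par v) < dep v) (v : V) : ℤ :=
  if h : dep v = 0 then 0
  else
    if hc : v ∈ childSet T dep (par v) then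
      chEmb T dep k m (par v) (lab Hpar (par v)) ⟨v, hc⟩
    else 0
termination_by dep v
decreasing_by exact Hpar v h

noncomputable def fval (Hpar : ∀ v, dep v ≠ 0 → dep (par v) < dep v) (v : V) : ℤ :=
  if h : dep v = 0 then 0
  else fval Hpar (par v) + lab T dep k m par Hpar v
termination_by dep v
decreasing_by exact Hpar v h

variable (Hpar : ∀ v, dep v ≠ 0 → dep (par v) < dep v)
  (H1 : ∀ v, dep v ≠ 0 → T.Adj v (par v) ∧ dep (par v) + 1 = dep v)
  (H2 : ∀ v u, T.Adj v u → (dep u + 1 = dep v ∨ dep v + 1 = dep u))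
  (H3 : ∀ v u, T.Adj v u → dep u + 1 = dep v → u = par v)
  (Hdeg : T.maxDegree ≤ 2 * k)

include H1 in
lemma child_mem {v : V} (hv : dep v ≠ 0) : v ∈ childSet T dep (par v) := by
  rw [childSet, Finset.mem_filter, mem_neighborFinset]
  exact ⟨(H1 v hv).1.symm, ((H1 v hv).2).symm⟩

include H1 Hdeg in
lemma card_ok (p : V) :
    (childSet T dep p).card ≤
      ((allowed k m).erase (-(lab T dep k m par Hpar p))).card := by
  have hdeg : T.degree p ≤ 2 * k := le_trans (T.degree_le_maxDegree p) Hdeg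
  have hcn : (T.neighborFinset p).card = T.degree p := rfl
  by_cases hp : dep p = 0
  · have hx : lab T dep k m par Hpar p = 0 := by rw [lab, dif_pos hp]
    have h0 : (0 : ℤ) ∉ allowed k m := by simp [mem_allowed]
    rw [hx, neg_zero, Finset.erase_eq_of_notMem h0, card_allowed]
    have hsub : childSet T dep p ⊆ T.neighborFinset p := by
      intro u hu; rw [childSet, Finset.mem_filter] at hu; exact hu.1
    have := Finset.card_le_card hsub
    omega
  · have h1 := H1 p hp
    have hmem : par p ∈ T.neighborFinset p := (mem_neighborFinset _ _ _).mpr h1.1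
    have hsub : childSet T dep p ⊆ (T.neighborFinset p).erase (par p) := by
      intro u hu
      rw [childSet, Finset.mem_filter] at hu
      rw [Finset.mem_erase]
      refine ⟨fun hc => ?_, hu.1⟩
      subst hc; omega
    have hc1 := Finset.card_le_card hsub
    rw [Finset.card_erase_of_mem hmem] at hc1
    have he : (allowed k m).card - 1 ≤ ((allowed k m).erase
        (-(lab T dep k m par Hpar p))).card := Finset.pred_card_le_card_erase
    rw [card_allowed] at he
    omega

include H1 in
lemma lab_eq {v : V} (hv : dep v ≠ 0) {p : V} (hp : par v = p)
    (hm : v ∈ childSet T dep p) :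
    lab T dep k m par Hpar v =
      chEmb T dep k m p (lab T dep k m par Hpar p) ⟨v, hm⟩ := by
  subst hp
  rw [lab, dif_neg hv, dif_pos (child_mem T dep par H1 hv)]

include H1 Hdeg in
lemma lab_spec {v : V} (hv : dep v ≠ 0) :
    lab T dep k m par Hpar v ∈
      (allowed k m).erase (-(lab T dep k m par Hpar (par v))) := by
  rw [lab_eq T dep k m par Hpar H1 hv rfl (child_mem T dep par H1 hv)]
  exact (chEmb_spec T dep k m _ _ (card_ok T dep k m par Hpar H1 Hdeg (par v))).2 _

include H1 Hdeg in
lemma lab_sibling {a b : V} (ha : dep a ≠ 0) (hb : dep b ≠ 0) (hp : par a = par b)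
    (hne : a ≠ b) : lab T dep k m par Hpar a ≠ lab T dep k m par Hpar b := by
  intro heq
  have hmb : b ∈ childSet T dep (par a) := hp ▸ child_mem T dep par H1 hb
  rw [lab_eq T dep k m par Hpar H1 ha rfl (child_mem T dep par H1 ha),
    lab_eq T dep k m par Hpar H1 hb hp.symm hmb] at heq
  have := (chEmb_spec T dep k m _ _ (card_ok T dep k m par Hpar H1 Hdeg (par a))).1 heq
  exact hne (congrArg Subtype.val this)

lemma fval_eq {v : V} (hv : dep v ≠ 0) :
    fval T dep k m par Hpar v =
      fval T dep k m par Hpar (par v) + lab T dep k m par Hpar v := by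
  rw [fval, dif_neg hv]

include H1 H2 H3 Hdeg in
lemma fval_adj {a b : V} (hab : T.Adj a b) :
    m < (fval T dep k m par Hpar a - fval T dep k m par Hpar b).natAbs ∧
      (fval T dep k m par Hpar a - fval T dep k m par Hpar b).natAbs ≤ m + k := by
  rcases H2 a b hab with hc | hc
  · have hb : b = par a := H3 a b hab hc
    have ha0 : dep a ≠ 0 := by omega
    have hmem : lab T dep k m par Hpar a ∈ allowed k m :=
      Finset.mem_of_mem_erase (lab_spec T dep k m par Hpar H1 Hdeg ha0)
    rw [mem_allowed] at hmem
    have he : fval T dep k m par Hpar a - fval T dep k m par Hpar b =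
        lab T dep k m par Hpar a := by
      rw [fval_eq T dep k m par Hpar ha0, ← hb]; ring
    rw [he]; exact hmem
  · have ha : a = par b := H3 b a hab.symm hc
    have hb0 : dep b ≠ 0 := by omega
    have hmem : lab T dep k m par Hpar b ∈ allowed k m :=
      Finset.mem_of_mem_erase (lab_spec T dep k m par Hpar H1 Hdeg hb0)
    rw [mem_allowed] at hmem
    have he : fval T dep k m par Hpar a - fval T dep k m par Hpar b =
        -(lab T dep k m par Hpar b) := by
      rw [fval_eq T dep k m par Hpar hb0, ← ha]; ring
    rw [he, Int.natAbs_neg]; exact hmem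

include H1 H2 H3 Hdeg in
lemma fval_star {p a b : V} (hpa : T.Adj p a) (hpb : T.Adj p b) (hne : a ≠ b) :
    fval T dep k m par Hpar a ≠ fval T dep k m par Hpar b := by
  intro heq
  rcases H2 p a hpa with h1 | h1 <;> rcases H2 p b hpb with h2 | h2
  · exact hne ((H3 p a hpa h1).trans (H3 p b hpb h2).symm)
  · -- a = par p, p = par b
    have hpb' : p = par b := H3 b p hpb.symm h2
    have ha' : a = par p := H3 p a hpa h1
    have hb0 : dep b ≠ 0 := by omega
    have hp0 : dep p ≠ 0 := by omega
    have e1 := fval_eq T dep k m par Hpar hb0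
    rw [← hpb'] at e1
    have e2 := fval_eq T dep k m par Hpar hp0
    rw [← ha'] at e2
    have hsp := lab_spec T dep k m par Hpar H1 Hdeg hb0
    rw [← hpb'] at hsp
    have hne' : lab T dep k m par Hpar b ≠ -(lab T dep k m par Hpar p) :=
      Finset.ne_of_mem_erase hsp
    apply hne'
    omega
  · -- b = par p, p = par a
    have hpa' : p = par a := H3 a p hpa.symm h1
    have hb' : b = par p := H3 p b hpb h2
    have ha0 : dep a ≠ 0 := by omega
    have hp0 : dep p ≠ 0 := by omega
    have e1 := fval_eq T dep k m par Hpar ha0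
    rw [← hpa'] at e1
    have e2 := fval_eq T dep k m par Hpar hp0
    rw [← hb'] at e2
    have hsp := lab_spec T dep k m par Hpar H1 Hdeg ha0
    rw [← hpa'] at hsp
    have hne' : lab T dep k m par Hpar a ≠ -(lab T dep k m par Hpar p) :=
      Finset.ne_of_mem_erase hsp
    apply hne'
    omega
  · -- both children of p
    have hpa' : p = par a := H3 a p hpa.symm h1
    have hpb' : p = par b := H3 b p hpb.symm h2
    have ha0 : dep a ≠ 0 := by omega
    have hb0 : dep b ≠ 0 := by omega
    have hlab := lab_sibling T dep k m par Hpar H1 Hdeg ha0 hb0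
      (by rw [← hpa', ← hpb']) hne
    have e1 := fval_eq T dep k m par Hpar ha0
    have e2 := fval_eq T dep k m par Hpar hb0
    rw [← hpa'] at e1
    rw [← hpb'] at e2
    omega

end Construction

theorem exists_fn (T : SimpleGraph V) [Fintype V] [DecidableRel T.Adj]
    (hT : T.IsTree) (k m : ℕ) (hdeg : T.maxDegree ≤ 2 * k) :
    ∃ f : V → ℤ,
      (∀ a b, T.Adj a b → m < (f a - f b).natAbs ∧ (f a - f b).natAbs ≤ m + k) ∧
      (∀ p a b, T.Adj p a → T.Adj p b → a ≠ b → f a ≠ f b) := by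
  classical
  obtain ⟨r⟩ : Nonempty V := hT.isConnected.nonempty
  let dep : V → ℕ := fun v => T.dist v r
  have hpe : ∀ v : V, dep v ≠ 0 → ∃ u, T.Adj v u ∧ dep u + 1 = dep v := fun v hv =>
    parent_exists hT r hv
  let par : V → V := fun v =>
    if h : dep v = 0 then v else Classical.choose (hpe v h)
  have H1 : ∀ v, dep v ≠ 0 → T.Adj v (par v) ∧ dep (par v) + 1 = dep v := by
    intro v hv
    have := Classical.choose_spec (hpe v hv)
    simpa only [par, dif_neg hv] using this
  have Hpar : ∀ v, dep v ≠ 0 → dep (par v) < dep v := by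
    intro v hv; have := (H1 v hv).2; omega
  have H2 : ∀ v u, T.Adj v u → (dep u + 1 = dep v ∨ dep v + 1 = dep u) :=
    fun v u h => adj_dist_cases hT r h
  have H3 : ∀ v u, T.Adj v u → dep u + 1 = dep v → u = par v := by
    intro v u h hd
    have hv : dep v ≠ 0 := by omega
    have h1 := H1 v hv
    exact parent_unique hT r h h1.1 hd h1.2
  exact ⟨fval T dep k m par Hpar,
    fun a b hab => fval_adj T dep k m par Hpar H1 H2 H3 hdeg hab,
    fun p a b hpa hpb hab => fval_star T dep k m par Hpar H1 H2 H3 hdeg hpa hpb hab⟩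

end TreeSqAux

theorem trees_product_square_chromatic_upper {d : ℕ} {V : Fin d → Type*}
    [∀ i, Fintype (V i)] (T : ∀ i, SimpleGraph (V i))
    [∀ i, DecidableRel (T i).Adj]
    (hT : ∀ i, (T i).IsTree) (hE : ∀ i, (T i).edgeSet.Nonempty) :
    (boxProdPi T).square'.chromaticNumber ≤
      ((1 + 2 * ∑ i, ((T i).maxDegree + 1) / 2 : ℕ) : ℕ∞) := by
  classical
  set k : Fin d → ℕ := fun i => ((T i).maxDegree + 1) / 2 with hkdef
  set mm : Fin d → ℕ := fun i => ∑ l ∈ Finset.univ.filter (fun l => l < i), k l with hmdef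
  have hdeg : ∀ i, (T i).maxDegree ≤ 2 * k i := fun i => by
    simp only [hkdef]; omega
  choose f hfA hfB using fun i => TreeSqAux.exists_fn (T i) (hT i) (k i) (mm i) (hdeg i)
  set K : ℕ := ∑ i, k i with hKdef
  set N : ℕ := 1 + 2 * K with hNdef
  have hmK : ∀ i, mm i + k i ≤ K := by
    intro i
    have hnm : i ∉ Finset.univ.filter (fun l => l < i) := by simp
    have hss : insert i (Finset.univ.filter (fun l => l < i)) ⊆ Finset.univ := by
      intro l _; exact Finset.mem_univ l
    have := Finset.sum_le_sum_of_subset (f := k) hss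
    rw [Finset.sum_insert hnm] at this
    simp only [hmdef, hKdef]
    omega
  have hmlt : ∀ i j, i < j → mm i + k i ≤ mm j := by
    intro i j hij
    have hnm : i ∉ Finset.univ.filter (fun l => l < i) := by simp
    have hss : insert i (Finset.univ.filter (fun l => l < i)) ⊆
        Finset.univ.filter (fun l => l < j) := by
      intro l hl
      rcases Finset.mem_insert.mp hl with rfl | hl
      · simp [hij]
      · simp only [Finset.mem_filter, Finset.mem_univ, true_and] at hl ⊢
        exact lt_trans hl hij
    have := Finset.sum_le_sum_of_subset (f := k) hss
    rw [Finset.sum_insert hnm] at this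
    simp only [hmdef]
    omega
  have key : ∀ u v : (∀ i, V i), (boxProdPi T).square'.Adj u v →
      0 < (∑ i, (f i (u i) - f i (v i))).natAbs ∧
        (∑ i, (f i (u i) - f i (v i))).natAbs < N := by
    rintro u v ⟨hne, hcase⟩
    rcases hcase with ⟨i, hadj, hoff⟩ | ⟨w, ⟨i, hiadj, hioff⟩, ⟨j, hjadj, hjoff⟩⟩
    · have hsum : ∑ l, (f l (u l) - f l (v l)) = f i (u i) - f i (v i) :=
        Finset.sum_eq_single i (fun l _ hl => by rw [hoff l hl]; ring)
          (fun h => absurd (Finset.mem_univ i) h)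
      have hb := hfA i _ _ hadj
      have hK := hmK i
      rw [hsum]
      omega
    · by_cases hij : i = j
      · subst hij
        have hsum : ∑ l, (f l (u l) - f l (v l)) = f i (u i) - f i (v i) :=
          Finset.sum_eq_single i
            (fun l _ hl => by rw [hioff l hl, hjoff l hl]; ring)
            (fun h => absurd (Finset.mem_univ i) h)
        by_cases huv : u i = v i
        · exact absurd (funext fun l => by
            by_cases hl : l = i
            · subst hl; exact huv
            · rw [hioff l hl, hjoff l hl]) hne
        · have h1 := hfA i _ _ hiadj
          have h2 := hfA i _ _ hjadj
          have h3 : f i (u i) ≠ f i (v i) := hfB i (w i) (u i) (v i) hiadj.symm hjadj huv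
          have hK := hmK i
          rw [hsum]
          omega
      · have hsum : ∑ l, (f l (u l) - f l (v l)) =
            (f i (u i) - f i (v i)) + (f j (u j) - f j (v j)) := by
          rw [← Finset.sum_subset (Finset.subset_univ ({i, j} : Finset (Fin d)))
            (fun l _ hl => ?_), Finset.sum_pair hij]
          have hli : l ≠ i := fun h => hl (by simp [h])
          have hlj : l ≠ j := fun h => hl (by simp [h])
          rw [hioff l hli, hjoff l hlj]; ring
        have e1 : w i = v i := hjoff i hij
        have e2 : u j = w j := hioff j (Ne.symm hij)
        have h1 := hfA i (u i) (w i) hiadj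
        have h2 := hfA j (w j) (v j) hjadj
        rw [hsum, ← e1, e2]
        rcases lt_or_gt_of_ne hij with h | h
        · have := hmlt i j h; have := hmK j; omega
        · have := hmlt j i h; have := hmK i; omega
  haveI : NeZero N := ⟨by omega⟩
  have hcol : (boxProdPi T).square'.Colorable N := by
    have C : (boxProdPi T).square'.Coloring (ZMod N) := by
      refine SimpleGraph.Coloring.mk (fun v => ((∑ i, f i (v i) : ℤ) : ZMod N)) ?_
      intro u v hadj heq
      have hk2 := key u v hadj
      have hsub : (∑ i, (f i (u i) - f i (v i)) : ℤ) =
          (∑ i, f i (u i)) - (∑ i, f i (v i)) := Finset.sum_sub_distrib _ _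
      have heq' : ((∑ i, f i (u i) : ℤ) : ZMod N) = ((∑ i, f i (v i) : ℤ) : ZMod N) := heq
      have hD0 : ((∑ i, (f i (u i) - f i (v i)) : ℤ) : ZMod N) = 0 := by
        rw [hsub, Int.cast_sub, heq', sub_self]
      have hdvd : (N : ℤ) ∣ ∑ i, (f i (u i) - f i (v i)) :=
        (ZMod.intCast_zmod_eq_zero_iff_dvd _ N).mp hD0
      have hdvd2 : N ∣ (∑ i, (f i (u i) - f i (v i))).natAbs := by
        have := Int.natAbs_dvd_natAbs.mpr hdvd
        simpa using this
      have := Nat.le_of_dvd hk2.1 hdvd2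
      omega
    have := C.colorable
    rwa [ZMod.card] at this
  exact hcol.chromaticNumber_le
end

section
/- Let G = G₁ □ ⋯ □ G_d be a cartesian product and suppose each G_i² has a proper integer colouring c_i such that all edges of G_i have span lying in an interval I_i, where the intervals I₁,…,I_d of positive integers are pairwise disjoint. Then c(v₁,…,v_d) := Σ_{i=1}^d c_i(v_i) is a proper colouring of G². -/
private lemma sum_diff_one {d : ℕ} {V : Fin d → Type*} (c : ∀ i, V i → ℤ)
    (x y : ∀ i, V i) (i : Fin d) (h : ∀ j, j ≠ i → x j = y j) :
    (∑ k, c k (x k)) - (∑ k, c k (y k)) = c i (x i) - c i (y i) := by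
  rw [← Finset.sum_sub_distrib]
  apply Finset.sum_eq_single
  · intro k _ hk
    rw [h k hk, sub_self]
  · intro hi; exact absurd (Finset.mem_univ i) hi

theorem boxProdPi_sum_colouring {d : ℕ} {V : Fin d → Type*}
    (G : ∀ i, SimpleGraph (V i)) (c : ∀ i, V i → ℤ)
    (a b : Fin d → ℤ) (ha : ∀ i, 0 < a i)
    (hdisj : Pairwise fun i j => Disjoint (Set.Icc (a i) (b i)) (Set.Icc (a j) (b j)))
    (hproper : ∀ i, ∀ x y, (G i).square'.Adj x y → c i x ≠ c i y)
    (hspan : ∀ i, ∀ x y, (G i).Adj x y → |c i x - c i y| ∈ Set.Icc (a i) (b i)) :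
    ∀ x y, (boxProdPi G).square'.Adj x y →
      (∑ i, c i (x i)) ≠ (∑ i, c i (y i)) := by
  rintro x y ⟨hne, hcase⟩ heq
  rcases hcase with ⟨i, hGi, hagree⟩ | ⟨w, ⟨i, hxi, hxa⟩, ⟨j, hwj, hwa⟩⟩
  · have h := sum_diff_one c x y i hagree
    rw [heq, sub_self] at h
    exact hproper i (x i) (y i) ⟨hGi.ne, Or.inl hGi⟩ (by linarith)
  · by_cases hij : i = j
    · subst hij
      have hagree : ∀ k, k ≠ i → x k = y k := fun k hk => (hxa k hk).trans (hwa k hk)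
      have hne' : x i ≠ y i := by
        intro h
        exact hne (funext fun k => by
          by_cases hk : k = i
          · subst hk; exact h
          · exact hagree k hk)
      have h := sum_diff_one c x y i hagree
      rw [heq, sub_self] at h
      exact hproper i (x i) (y i) ⟨hne', Or.inr ⟨w i, hxi, hwj⟩⟩ (by linarith)
    · have h1 := sum_diff_one c x w i (fun k hk => hxa k hk)
      have h2 := sum_diff_one c w y j (fun k hk => hwa k hk)
      have hs1 := hspan i (x i) (w i) hxi
      have hs2 := hspan j (w j) (y j) hwj
      have hd : c i (x i) - c i (w i) = -(c j (w j) - c j (y j)) := by linarith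
      rw [hd, abs_neg] at hs1
      exact Set.disjoint_left.mp (hdisj hij) hs1 hs2
end

section
/- Let T₁ and T₂ be finite trees with at least one edge such that Δ(T₁) and Δ(T₂) are both even. Then χ((T₁ □ T₂)²) = 1 + Δ(T₁) + Δ(T₂). -/
namespace TreeAux

open SimpleGraph Walk

open scoped Classical

variable {V : Type*} {T : SimpleGraph V}

/-- The unique path from `r` to `u` in a tree. -/
noncomputable def P (hT : T.IsTree) (r u : V) : T.Walk r u :=
  (hT.existsUnique_path r u).choose

lemma P_isPath (hT : T.IsTree) (r u : V) : (P hT r u).IsPath :=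
  (hT.existsUnique_path r u).choose_spec.1

lemma P_unique (hT : T.IsTree) {r u : V} (q : T.Walk r u) (hq : q.IsPath) :
    q = P hT r u :=
  (hT.existsUnique_path r u).choose_spec.2 q hq

/-- Depth of a vertex: length of the unique path from the root. -/
noncomputable def dep (hT : T.IsTree) (r u : V) : ℕ := (P hT r u).length

/-- Parent of a vertex: second vertex on the unique path from `u` to `r`. -/
noncomputable def par (hT : T.IsTree) (r u : V) : V := (P hT r u).reverse.getVert 1

lemma P_nil (hT : T.IsTree) (r : V) : P hT r r = Walk.nil :=
  (P_unique hT Walk.nil IsPath.nil).symm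

lemma eq_root_of_dep_eq_zero (hT : T.IsTree) {r u : V} (h : dep hT r u = 0) : u = r :=
  (Walk.eq_of_length_eq_zero h).symm

lemma dep_pos (hT : T.IsTree) {r u : V} (h : u ≠ r) : 0 < dep hT r u := by
  rcases Nat.eq_zero_or_pos (dep hT r u) with h0 | h0
  · exact absurd (eq_root_of_dep_eq_zero hT h0) h
  · exact h0

lemma par_root (hT : T.IsTree) (r : V) : par hT r r = r := by
  rw [par, P_nil]
  rfl

lemma adj_par (hT : T.IsTree) {r u : V} (h : u ≠ r) : T.Adj u (par hT r u) := by
  have hlen : 0 < (P hT r u).reverse.length := by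
    rw [Walk.length_reverse]; exact dep_pos hT h
  have := (P hT r u).reverse.adj_getVert_succ hlen
  rwa [Walk.getVert_zero] at this

lemma P_concat (hT : T.IsTree) {r w u : V} (hadj : T.Adj w u)
    (hu : u ∉ (P hT r w).support) : P hT r u = (P hT r w).concat hadj := by
  refine (P_unique hT _ ?_).symm
  rw [Walk.isPath_def, Walk.support_concat]
  rw [List.nodup_append]
  exact ⟨(P_isPath hT r w).support_nodup, List.nodup_singleton u,
    fun a ha b hb hab => hu (by rw [List.mem_singleton] at hb; rw [← hb, ← hab]; exact ha)⟩

lemma dep_concat (hT : T.IsTree) {r w u : V} (hadj : T.Adj w u)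
    (hu : u ∉ (P hT r w).support) : dep hT r u = dep hT r w + 1 := by
  rw [dep, P_concat hT hadj hu, Walk.length_concat]; rfl

lemma par_concat (hT : T.IsTree) {r w u : V} (hadj : T.Adj w u)
    (hu : u ∉ (P hT r w).support) : par hT r u = w := by
  rw [par, P_concat hT hadj hu, Walk.reverse_concat]
  rw [Walk.getVert_cons_succ, Walk.getVert_zero]

lemma not_both_mem (hT : T.IsTree) {r w u : V} (hadj : T.Adj w u)
    (hu : u ∈ (P hT r w).support) : w ∉ (P hT r u).support := by
  classical
  intro hw
  have hq : (P hT r w).IsPath := P_isPath hT r w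
  have htu : ((P hT r w).takeUntil u hu).IsPath := hq.takeUntil hu
  have hPu : (P hT r w).takeUntil u hu = P hT r u := P_unique hT _ htu
  have hw1 : w ∈ ((P hT r w).takeUntil u hu).support := by rw [hPu]; exact hw
  have hw2 : w ∈ ((P hT r w).dropUntil u hu).support.tail := by
    have hend : w ∈ ((P hT r w).dropUntil u hu).support :=
      Walk.end_mem_support _
    have hne : w ≠ u := hadj.ne
    rw [Walk.support_eq_cons] at hend
    rcases List.mem_cons.mp hend with h | h
    · exact absurd h hne
    · exact h
  have hnodup :
      (((P hT r w).takeUntil u hu).support ++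
        ((P hT r w).dropUntil u hu).support.tail).Nodup := by
    have := hq.support_nodup
    rw [← Walk.take_spec (P hT r w) hu, Walk.support_append] at this
    exact this
  exact (List.disjoint_of_nodup_append hnodup) hw1 hw2

lemma mem_or (hT : T.IsTree) {r w u : V} (hadj : T.Adj w u) :
    u ∉ (P hT r w).support ∨ w ∉ (P hT r u).support := by
  by_cases h : u ∈ (P hT r w).support
  · exact Or.inr (not_both_mem hT hadj h)
  · exact Or.inl h

lemma par_or (hT : T.IsTree) {r w u : V} (hadj : T.Adj w u) :
    par hT r u = w ∨ par hT r w = u := by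
  rcases mem_or hT (r := r) hadj with h | h
  · exact Or.inl (par_concat hT hadj h)
  · exact Or.inr (par_concat hT hadj.symm h)

lemma par_mem_support (hT : T.IsTree) {r u : V} (h : u ≠ r) :
    par hT r u ∈ (P hT r u).support := by
  have h1 : par hT r u ∈ (P hT r u).reverse.support := by
    rw [Walk.mem_support_iff_exists_getVert]
    exact ⟨1, rfl, by rw [Walk.length_reverse]; exact dep_pos hT h⟩
  rwa [Walk.support_reverse, List.mem_reverse] at h1

lemma ne_root_of_adj_par (hT : T.IsTree) {r w u : V} (hadj : T.Adj w u)
    (hpar : par hT r u = w) : u ≠ r := by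
  rintro rfl
  rw [par_root] at hpar
  subst hpar
  exact hadj.ne rfl

lemma dep_of_par (hT : T.IsTree) {r w u : V} (hadj : T.Adj w u)
    (hpar : par hT r u = w) : dep hT r u = dep hT r w + 1 := by
  have hur : u ≠ r := ne_root_of_adj_par hT hadj hpar
  rcases mem_or hT (r := r) hadj with h | h
  · exact dep_concat hT hadj h
  · exact absurd (hpar ▸ par_mem_support hT hur) h

lemma dep_par_lt (hT : T.IsTree) {r u : V} (h : u ≠ r) :
    dep hT r (par hT r u) < dep hT r u := by
  have hadj : T.Adj (par hT r u) u := (adj_par hT h).symm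
  have := dep_of_par hT hadj rfl
  omega

/-- Children of a vertex (with respect to root `r`). -/
def child (hT : T.IsTree) (r w : V) : Set V := {u | T.Adj w u ∧ par hT r u = w}

/-- Choice of an injection from the children of `w` into `S.erase b`. -/
noncomputable def pick (hT : T.IsTree) (r : V) (S : Finset ℤ) (w : V) (b : ℤ) : V → ℤ :=
  if h : ∃ g : V → ℤ, (∀ x ∈ child hT r w, g x ∈ S.erase b) ∧
      Set.InjOn g (child hT r w) then h.choose else fun _ => 0

lemma pick_spec (hT : T.IsTree) (r : V) (S : Finset ℤ) (w : V) (b : ℤ)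
    (h : ∃ g : V → ℤ, (∀ x ∈ child hT r w, g x ∈ S.erase b) ∧
      Set.InjOn g (child hT r w)) :
    (∀ x ∈ child hT r w, pick hT r S w b x ∈ S.erase b) ∧
      Set.InjOn (pick hT r S w b) (child hT r w) := by
  rw [pick, dif_pos h]
  exact h.choose_spec

/-- The pair (edge label, accumulated label) built by recursion on depth. -/
noncomputable def LF (hT : T.IsTree) (r : V) (S : Finset ℤ) (u : V) : ℤ × ℤ :=
  if h : u = r then (0, 0)
  else
    (pick hT r S (par hT r u) (-(LF hT r S (par hT r u)).1) u,
     (LF hT r S (par hT r u)).2 +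
       pick hT r S (par hT r u) (-(LF hT r S (par hT r u)).1) u)
termination_by dep hT r u
decreasing_by all_goals exact dep_par_lt hT h

lemma LF_root (hT : T.IsTree) (r : V) (S : Finset ℤ) : LF hT r S r = (0, 0) := by
  rw [LF]; simp

lemma LF_ne (hT : T.IsTree) (r : V) (S : Finset ℤ) {u : V} (h : u ≠ r) :
    LF hT r S u =
      (pick hT r S (par hT r u) (-(LF hT r S (par hT r u)).1) u,
       (LF hT r S (par hT r u)).2 +
         pick hT r S (par hT r u) (-(LF hT r S (par hT r u)).1) u) := by
  conv_lhs => rw [LF]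
  simp [h]

lemma exists_g {α : Type*} (c : Set α) (hc : c.Finite) (t : Finset ℤ)
    (h : ∃ F : Finset α, c ⊆ ↑F ∧ F.card ≤ t.card) :
    ∃ g : α → ℤ, (∀ x ∈ c, g x ∈ t) ∧ Set.InjOn g c := by
  obtain ⟨F, hsub, hcard⟩ := h
  have hle : c.encard ≤ (↑t : Set ℤ).encard := by
    calc c.encard ≤ (↑F : Set α).encard := Set.encard_le_encard hsub
      _ = (F.card : ℕ∞) := Set.encard_coe_eq_coe_finsetCard F
      _ ≤ (t.card : ℕ∞) := by exact_mod_cast hcard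
      _ = (↑t : Set ℤ).encard := (Set.encard_coe_eq_coe_finsetCard t).symm
  obtain ⟨g, hg1, hg2⟩ := Set.Finite.exists_injOn_of_encard_le hc hle
  exact ⟨g, fun x hx => hg1 hx, hg2⟩

/-- Main labeling lemma: a tree with degrees bounded by `S.card`, where `S` is a
symmetric set of nonzero integers, admits a vertex labeling whose differences along
edges lie in `S` and are injective around each vertex. -/
theorem exists_labeling [Fintype V] [DecidableRel T.Adj] (hT : T.IsTree)
    (S : Finset ℤ) (h0 : (0 : ℤ) ∉ S) (hsym : ∀ a ∈ S, -a ∈ S)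
    (hdeg : ∀ v, T.degree v ≤ S.card) :
    ∃ f : V → ℤ, (∀ ⦃w u⦄, T.Adj w u → f u - f w ∈ S) ∧
      (∀ ⦃w u u'⦄, T.Adj w u → T.Adj w u' → f u - f w = f u' - f w → u = u') := by
  classical
  obtain ⟨r⟩ : Nonempty V := hT.isConnected.nonempty
  set ℓ : V → ℤ := fun u => (LF hT r S u).1 with hℓ
  set f : V → ℤ := fun u => (LF hT r S u).2 with hf
  -- children are contained in appropriate neighbor finsets
  have hchild_sub : ∀ w : V, child hT r w ⊆ ↑(T.neighborFinset w) := by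
    intro w u hu
    rw [Finset.mem_coe, SimpleGraph.mem_neighborFinset]
    exact hu.1
  have hpar_not_child : ∀ w : V, w ≠ r → par hT r w ∉ child hT r w := by
    intro w hw ⟨hadj, hpar⟩
    have h1 : dep hT r (par hT r w) = dep hT r w + 1 := dep_of_par hT hadj hpar
    have h2 : dep hT r w = dep hT r (par hT r w) + 1 :=
      dep_of_par hT (adj_par hT hw).symm rfl
    omega
  have hchild_sub' : ∀ w : V, w ≠ r →
      child hT r w ⊆ ↑((T.neighborFinset w).erase (par hT r w)) := by
    intro w hw u hu
    rw [Finset.mem_coe, Finset.mem_erase, SimpleGraph.mem_neighborFinset]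
    exact ⟨fun h => hpar_not_child w hw (h ▸ hu), hu.1⟩
  -- existence of suitable injections
  have hex_root : ∀ w : V, ℓ w = 0 →
      ∃ g : V → ℤ, (∀ x ∈ child hT r w, g x ∈ S.erase (-(ℓ w))) ∧
        Set.InjOn g (child hT r w) := by
    intro w hw0
    apply exists_g _ (Set.toFinite _)
    refine ⟨T.neighborFinset w, hchild_sub w, ?_⟩
    rw [hw0, neg_zero, Finset.erase_eq_of_notMem h0]
    exact hdeg w
  have hex_ne : ∀ w : V, w ≠ r → ℓ w ∈ S →
      ∃ g : V → ℤ, (∀ x ∈ child hT r w, g x ∈ S.erase (-(ℓ w))) ∧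
        Set.InjOn g (child hT r w) := by
    intro w hw hwS
    apply exists_g _ (Set.toFinite _)
    refine ⟨(T.neighborFinset w).erase (par hT r w), hchild_sub' w hw, ?_⟩
    rw [Finset.card_erase_of_mem, Finset.card_erase_of_mem (hsym _ hwS)]
    · exact Nat.sub_le_sub_right (hdeg w) 1
    · rw [SimpleGraph.mem_neighborFinset]
      exact adj_par hT hw
  -- invariant: edge labels lie in S.erase (-(ℓ (par u)))
  have inv : ∀ n : ℕ, ∀ u : V, dep hT r u < n → u ≠ r →
      ℓ u ∈ S.erase (-(ℓ (par hT r u))) := by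
    intro n
    induction n with
    | zero => intro u h; omega
    | succ n ih =>
      intro u hdep hu
      have hadj : T.Adj (par hT r u) u := (adj_par hT hu).symm
      have huc : u ∈ child hT r (par hT r u) := ⟨hadj, rfl⟩
      have hdp : dep hT r (par hT r u) < n := by
        have := dep_of_par hT hadj rfl; omega
      have hexg : ∃ g : V → ℤ,
          (∀ x ∈ child hT r (par hT r u), g x ∈ S.erase (-(ℓ (par hT r u)))) ∧
            Set.InjOn g (child hT r (par hT r u)) := by
        by_cases hp : par hT r u = r
        · apply hex_root
          rw [hℓ]; simp only []
          rw [hp, LF_root]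
        · refine hex_ne _ hp ?_
          exact Finset.mem_of_mem_erase (ih (par hT r u) hdp hp)
      have hspec := pick_spec hT r S (par hT r u) (-(ℓ (par hT r u))) hexg
      have hval : ℓ u = pick hT r S (par hT r u) (-(ℓ (par hT r u))) u := by
        rw [hℓ]; simp only []
        rw [LF_ne hT r S hu]
      rw [hval]
      exact hspec.1 u huc
  have inv' : ∀ u : V, u ≠ r → ℓ u ∈ S.erase (-(ℓ (par hT r u))) :=
    fun u hu => inv (dep hT r u + 1) u (by omega) hu
  -- the specification of pick at each vertex
  have spec : ∀ w : V,
      (∀ x ∈ child hT r w, pick hT r S w (-(ℓ w)) x ∈ S.erase (-(ℓ w))) ∧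
        Set.InjOn (pick hT r S w (-(ℓ w))) (child hT r w) := by
    intro w
    apply pick_spec
    by_cases hw : w = r
    · apply hex_root
      rw [hℓ]; simp only []
      rw [hw, LF_root]
    · exact hex_ne w hw (Finset.mem_of_mem_erase (inv' w hw))
  -- basic difference equation
  have fdiff : ∀ u : V, u ≠ r → f u - f (par hT r u) = ℓ u := by
    intro u hu
    rw [hf, hℓ]; simp only []
    rw [LF_ne hT r S hu]
    simp
  have hval : ∀ u : V, u ≠ r →
      ℓ u = pick hT r S (par hT r u) (-(ℓ (par hT r u))) u := by
    intro u hu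
    rw [hℓ]; simp only []
    rw [LF_ne hT r S hu]
  refine ⟨f, ?_, ?_⟩
  · intro w u hadj
    rcases par_or hT (r := r) hadj with hp | hp
    · have hu : u ≠ r := ne_root_of_adj_par hT hadj hp
      have := fdiff u hu
      rw [hp] at this
      rw [this]
      exact Finset.mem_of_mem_erase (hp ▸ inv' u hu)
    · have hw : w ≠ r := ne_root_of_adj_par hT hadj.symm hp
      have := fdiff w hw
      rw [hp] at this
      have h2 : f u - f w = -(ℓ w) := by omega
      rw [h2]
      exact hsym _ (Finset.mem_of_mem_erase (inv' w hw))
  · intro w u u' hadj hadj' heq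
    rcases par_or hT (r := r) hadj with hp | hp <;>
      rcases par_or hT (r := r) hadj' with hp' | hp'
    · -- both children of w
      have hu : u ≠ r := ne_root_of_adj_par hT hadj hp
      have hu' : u' ≠ r := ne_root_of_adj_par hT hadj' hp'
      have h1 : f u - f w = ℓ u := by have := fdiff u hu; rwa [hp] at this
      have h2 : f u' - f w = ℓ u' := by have := fdiff u' hu'; rwa [hp'] at this
      have hc : u ∈ child hT r w := ⟨hadj, hp⟩
      have hc' : u' ∈ child hT r w := ⟨hadj', hp'⟩
      have hvu : ℓ u = pick hT r S w (-ℓ w) u := by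
        have := hval u hu; rwa [hp] at this
      have hvu' : ℓ u' = pick hT r S w (-ℓ w) u' := by
        have := hval u' hu'; rwa [hp'] at this
      apply (spec w).2 hc hc'
      rw [← hvu, ← hvu', ← h1, ← h2, heq]
    · -- u child, u' parent of w
      exfalso
      have hu : u ≠ r := ne_root_of_adj_par hT hadj hp
      have hw : w ≠ r := ne_root_of_adj_par hT hadj'.symm hp'
      have h1 : f u - f w = ℓ u := by have := fdiff u hu; rwa [hp] at this
      have h2 : f w - f u' = ℓ w := by have := fdiff w hw; rwa [hp'] at this
      have h3 : ℓ u ∈ S.erase (-(ℓ w)) := by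
        have := inv' u hu; rwa [hp] at this
      have h4 : ℓ u ≠ -(ℓ w) := Finset.ne_of_mem_erase h3
      omega
    · -- u parent of w, u' child
      exfalso
      have hu' : u' ≠ r := ne_root_of_adj_par hT hadj' hp'
      have hw : w ≠ r := ne_root_of_adj_par hT hadj.symm hp
      have h1 : f u' - f w = ℓ u' := by have := fdiff u' hu'; rwa [hp'] at this
      have h2 : f w - f u = ℓ w := by have := fdiff w hw; rwa [hp] at this
      have h3 : ℓ u' ∈ S.erase (-(ℓ w)) := by
        have := inv' u' hu'; rwa [hp'] at this
      have h4 : ℓ u' ≠ -(ℓ w) := Finset.ne_of_mem_erase h3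
      omega
    · -- both equal the parent of w
      rw [← hp, ← hp']

end TreeAux

set_option maxHeartbeats 1000000 in
theorem two_trees_product_square_chromatic {V W : Type*} [Fintype V] [Fintype W]
    (T₁ : SimpleGraph V) (T₂ : SimpleGraph W)
    [DecidableRel T₁.Adj] [DecidableRel T₂.Adj]
    (hT₁ : T₁.IsTree) (hT₂ : T₂.IsTree)
    (hE₁ : T₁.edgeSet.Nonempty) (hE₂ : T₂.edgeSet.Nonempty)
    (h₁ : Even T₁.maxDegree) (h₂ : Even T₂.maxDegree) :
    (T₁ □ T₂).square'.chromaticNumber =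
      ((1 + T₁.maxDegree + T₂.maxDegree : ℕ) : ℕ∞) := by
  classical
  obtain ⟨m₁, hm₁⟩ := h₁
  obtain ⟨m₂, hm₂⟩ := h₂
  set Δ₁ := T₁.maxDegree with hΔ₁
  set Δ₂ := T₂.maxDegree with hΔ₂
  set k : ℕ := 1 + Δ₁ + Δ₂ with hk
  haveI : NeZero k := ⟨by omega⟩
  -- the label sets
  set S₁ : Finset ℤ :=
    Finset.Icc 1 (m₁ : ℤ) ∪ Finset.Icc (-(m₁ : ℤ)) (-1) with hS₁
  set S₂ : Finset ℤ :=
    Finset.Icc ((m₁ : ℤ) + 1) ((m₁ : ℤ) + m₂) ∪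
      Finset.Icc (-((m₁ : ℤ) + m₂)) (-((m₁ : ℤ) + 1)) with hS₂
  have memS₁ : ∀ a : ℤ, a ∈ S₁ ↔
      (1 ≤ a ∧ a ≤ (m₁ : ℤ)) ∨ (-(m₁ : ℤ) ≤ a ∧ a ≤ -1) := by
    intro a; simp [hS₁, Finset.mem_union, Finset.mem_Icc]
  have memS₂ : ∀ a : ℤ, a ∈ S₂ ↔
      ((m₁ : ℤ) + 1 ≤ a ∧ a ≤ (m₁ : ℤ) + m₂) ∨
        (-((m₁ : ℤ) + m₂) ≤ a ∧ a ≤ -((m₁ : ℤ) + 1)) := by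
    intro a; simp [hS₂, Finset.mem_union, Finset.mem_Icc]
  have cardS₁ : S₁.card = m₁ + m₁ := by
    rw [hS₁, Finset.card_union_of_disjoint]
    · rw [Int.card_Icc, Int.card_Icc]; omega
    · rw [Finset.disjoint_left]
      intro a ha hb
      rw [Finset.mem_Icc] at ha hb
      omega
  have cardS₂ : S₂.card = m₂ + m₂ := by
    rw [hS₂, Finset.card_union_of_disjoint]
    · rw [Int.card_Icc, Int.card_Icc]; omega
    · rw [Finset.disjoint_left]
      intro a ha hb
      rw [Finset.mem_Icc] at ha hb
      omega
  -- the labelings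
  obtain ⟨f₁, hf₁S, hf₁inj⟩ := TreeAux.exists_labeling hT₁ S₁
    (by rw [memS₁]; omega)
    (by intro a ha; rw [memS₁] at *; omega)
    (fun v => by rw [cardS₁, ← hm₁]; exact T₁.degree_le_maxDegree v)
  obtain ⟨f₂, hf₂S, hf₂inj⟩ := TreeAux.exists_labeling hT₂ S₂
    (by rw [memS₂]; omega)
    (by intro a ha; rw [memS₂] at *; omega)
    (fun v => by rw [cardS₂, ← hm₂]; exact T₂.degree_le_maxDegree v)
  -- the coloring
  have valid : ∀ {x y : V × W}, (T₁ □ T₂).square'.Adj x y →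
      ((f₁ x.1 + f₂ x.2 : ℤ) : ZMod k) ≠ ((f₁ y.1 + f₂ y.2 : ℤ) : ZMod k) := by
    rintro ⟨u, v⟩ ⟨u', v'⟩ hadj heq
    obtain ⟨hne, hcase⟩ : _ ∧ _ := hadj
    have hdvd : (k : ℤ) ∣ (f₁ u + f₂ v) - (f₁ u' + f₂ v') := by
      have h0 : (((f₁ u + f₂ v) - (f₁ u' + f₂ v') : ℤ) : ZMod k) = 0 := by
        push_cast
        rw [sub_eq_zero]
        exact_mod_cast heq
      exact (ZMod.intCast_zmod_eq_zero_iff_dvd _ _).1 h0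
    have hkk : ((k : ℤ)) = 1 + (m₁ : ℤ) + m₁ + m₂ + m₂ := by
      rw [hk]; push_cast; omega
    simp only [SimpleGraph.boxProd_adj] at hcase
    rcases hcase with (⟨h, hv⟩ | ⟨h, hu⟩) | ⟨⟨a, b⟩, hs1, hs2⟩
    · -- direct adjacency in first coordinate
      subst hv
      have hm := hf₁S h.symm
      rw [memS₁] at hm
      have hD : (f₁ u + f₂ v) - (f₁ u' + f₂ v) = 0 :=
        Int.eq_zero_of_abs_lt_dvd hdvd (by rw [abs_lt]; omega)
      omega
    · -- direct adjacency in second coordinate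
      subst hu
      have hm := hf₂S h.symm
      rw [memS₂] at hm
      have hD : (f₁ u + f₂ v) - (f₁ u + f₂ v') = 0 :=
        Int.eq_zero_of_abs_lt_dvd hdvd (by rw [abs_lt]; omega)
      omega
    · simp only at hs1 hs2
      rcases hs1 with ⟨h1, e1⟩ | ⟨h1, e1⟩ <;> rcases hs2 with ⟨h2, e2⟩ | ⟨h2, e2⟩
      · -- both steps in first coordinate
        have ev : v = v' := e1.trans e2
        have hmu := hf₁S h1.symm
        have hmu' := hf₁S h2
        rw [memS₁] at hmu hmu'
        rw [← ev] at hdvd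
        have hD : (f₁ u + f₂ v) - (f₁ u' + f₂ v) = 0 :=
          Int.eq_zero_of_abs_lt_dvd hdvd (by rw [abs_lt]; omega)
        have huu : u ≠ u' := fun h => hne (by rw [h, ev])
        exact huu (hf₁inj h1.symm h2 (by omega))
      · -- first coordinate then second
        have h1' : T₁.Adj u u' := by rw [e2] at h1; exact h1
        have h2' : T₂.Adj v v' := by rw [e1]; exact h2
        have hmu := hf₁S h1'.symm
        have hmv := hf₂S h2'
        rw [memS₁] at hmu
        rw [memS₂] at hmv
        have hD : (f₁ u + f₂ v) - (f₁ u' + f₂ v') = 0 :=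
          Int.eq_zero_of_abs_lt_dvd hdvd (by rw [abs_lt]; omega)
        omega
      · -- second coordinate then first
        have h1' : T₂.Adj v v' := by rw [e2] at h1; exact h1
        have h2' : T₁.Adj u u' := by rw [e1]; exact h2
        have hmu := hf₁S h2'.symm
        have hmv := hf₂S h1'
        rw [memS₁] at hmu
        rw [memS₂] at hmv
        have hD : (f₁ u + f₂ v) - (f₁ u' + f₂ v') = 0 :=
          Int.eq_zero_of_abs_lt_dvd hdvd (by rw [abs_lt]; omega)
        omega
      · -- both steps in second coordinate
        have eu : u = u' := e1.trans e2
        have hmv := hf₂S h1.symm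
        have hmv' := hf₂S h2
        rw [memS₂] at hmv hmv'
        rw [← eu] at hdvd
        have hD : (f₁ u + f₂ v) - (f₁ u + f₂ v') = 0 :=
          Int.eq_zero_of_abs_lt_dvd hdvd (by rw [abs_lt]; omega)
        have hvv : v ≠ v' := fun h => hne (by rw [h, eu])
        exact hvv (hf₂inj h1.symm h2 (by omega))
  have C : (T₁ □ T₂).square'.Coloring (ZMod k) :=
    SimpleGraph.Coloring.mk (fun x => ((f₁ x.1 + f₂ x.2 : ℤ) : ZMod k))
      (fun h => valid h)
  -- upper bound
  have hupper : (T₁ □ T₂).square'.chromaticNumber ≤ (k : ℕ∞) := by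
    have := C.colorable.chromaticNumber_le
    rwa [ZMod.card] at this
  -- lower bound via a clique
  obtain ⟨e₁, he₁⟩ := hE₁
  obtain ⟨e₂, he₂⟩ := hE₂
  haveI : Nonempty V := ⟨e₁.out.1⟩
  haveI : Nonempty W := ⟨e₂.out.1⟩
  obtain ⟨u₀, hu₀⟩ := T₁.exists_maximal_degree_vertex
  obtain ⟨w₀, hw₀⟩ := T₂.exists_maximal_degree_vertex
  set cliq : Finset (V × W) :=
    insert (u₀, w₀) ((T₁.neighborFinset u₀ ×ˢ {w₀}) ∪
      ({u₀} ×ˢ T₂.neighborFinset w₀)) with hcliq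
  have hmem : ∀ (a : V) (b : W), (a, b) ∈ cliq ↔
      (u₀ = a ∧ w₀ = b) ∨ (T₁.Adj u₀ a ∧ w₀ = b) ∨ (u₀ = a ∧ T₂.Adj w₀ b) := by
    intro a b
    rw [hcliq]
    constructor
    · intro h
      rcases Finset.mem_insert.mp h with h | h
      · rw [Prod.ext_iff] at h
        exact Or.inl ⟨h.1.symm, h.2.symm⟩
      · rcases Finset.mem_union.mp h with h | h
        · rw [Finset.mem_product] at h
          exact Or.inr (Or.inl ⟨((SimpleGraph.mem_neighborFinset _ _ _).mp h.1),
            (Finset.mem_singleton.mp h.2).symm⟩)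
        · rw [Finset.mem_product] at h
          exact Or.inr (Or.inr ⟨(Finset.mem_singleton.mp h.1).symm,
            ((SimpleGraph.mem_neighborFinset _ _ _).mp h.2)⟩)
    · rintro (⟨rfl, rfl⟩ | ⟨h1, rfl⟩ | ⟨rfl, h2⟩)
      · exact Finset.mem_insert_self _ _
      · refine Finset.mem_insert_of_mem (Finset.mem_union_left _ ?_)
        rw [Finset.mem_product]
        exact ⟨(SimpleGraph.mem_neighborFinset _ _ _).mpr h1, Finset.mem_singleton_self _⟩
      · refine Finset.mem_insert_of_mem (Finset.mem_union_right _ ?_)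
        rw [Finset.mem_product]
        exact ⟨Finset.mem_singleton_self _, (SimpleGraph.mem_neighborFinset _ _ _).mpr h2⟩
  have hclique : (T₁ □ T₂).square'.IsClique ↑cliq := by
    rintro ⟨p1, p2⟩ hp ⟨q1, q2⟩ hq hpq
    rw [Finset.mem_coe, hmem] at hp hq
    change _ ∧ _
    refine ⟨hpq, ?_⟩
    rcases hp with ⟨rfl, rfl⟩ | ⟨hp1, rfl⟩ | ⟨rfl, hp2⟩ <;>
      rcases hq with ⟨rfl, rfl⟩ | ⟨hq1, rfl⟩ | ⟨rfl, hq2⟩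
    · exact absurd rfl hpq
    · exact Or.inl (by simp [SimpleGraph.boxProd_adj, hq1])
    · exact Or.inl (by simp [SimpleGraph.boxProd_adj, hq2])
    · exact Or.inl (by simp [SimpleGraph.boxProd_adj, hp1.symm])
    · exact Or.inr ⟨(u₀, w₀), by simp [SimpleGraph.boxProd_adj, hp1.symm],
        by simp [SimpleGraph.boxProd_adj, hq1]⟩
    · exact Or.inr ⟨(u₀, w₀), by simp [SimpleGraph.boxProd_adj, hp1.symm],
        by simp [SimpleGraph.boxProd_adj, hq2]⟩
    · exact Or.inl (by simp [SimpleGraph.boxProd_adj, hp2.symm])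
    · exact Or.inr ⟨(u₀, w₀), by simp [SimpleGraph.boxProd_adj, hp2.symm],
        by simp [SimpleGraph.boxProd_adj, hq1]⟩
    · exact Or.inr ⟨(u₀, w₀), by simp [SimpleGraph.boxProd_adj, hp2.symm],
        by simp [SimpleGraph.boxProd_adj, hq2]⟩
  have hnotmem : (u₀, w₀) ∉ (T₁.neighborFinset u₀ ×ˢ {w₀}) ∪
      ({u₀} ×ˢ T₂.neighborFinset w₀) := by
    simp only [Finset.mem_union, Finset.mem_product, Finset.mem_singleton,
      SimpleGraph.mem_neighborFinset]
    rintro (⟨h, -⟩ | ⟨-, h⟩) <;> exact h.ne rfl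
  have hdisj : Disjoint (T₁.neighborFinset u₀ ×ˢ ({w₀} : Finset W))
      (({u₀} : Finset V) ×ˢ T₂.neighborFinset w₀) := by
    rw [Finset.disjoint_left]
    rintro ⟨a, b⟩ ha hb
    rw [Finset.mem_product] at ha hb
    rw [Finset.mem_singleton] at hb
    have := (SimpleGraph.mem_neighborFinset _ _ _).1 ha.1
    exact this.ne' hb.1
  have hcard : cliq.card = k := by
    rw [hcliq, Finset.card_insert_of_notMem hnotmem,
      Finset.card_union_of_disjoint hdisj, Finset.card_product,
      Finset.card_product]
    simp only [Finset.card_singleton]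
    rw [SimpleGraph.card_neighborFinset_eq_degree,
      SimpleGraph.card_neighborFinset_eq_degree, ← hu₀, ← hw₀, hk]
    omega
  have hlower : (k : ℕ∞) ≤ (T₁ □ T₂).square'.chromaticNumber := by
    have := hclique.card_le_chromaticNumber
    rwa [hcard] at this
  have hfinal : (T₁ □ T₂).square'.chromaticNumber = (k : ℕ∞) :=
    le_antisymm hupper hlower
  rw [hfinal, hk]
end

section
/- Let T be a finite tree with at least one edge and let G = T □ T (the cartesian product of T with itself). Then χ(G²) ≤ 1 + 4⌈Δ(T)/2⌉ ≤ 2Δ(T) + 3. -/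
open SimpleGraph

namespace TreeSq

variable {V : Type*} [DecidableEq V] {T : SimpleGraph V} {r : V}

lemma dist_lt_of_mem_support {x b : V} (p : T.Walk r x)
    (hp : p.length = T.dist r x) (hb : b ∈ p.support) (hbx : b ≠ x) :
    T.dist r b < T.dist r x := by
  have h1 : T.dist r b ≤ (p.takeUntil b hb).length := SimpleGraph.dist_le _
  have h2 := congrArg Walk.length (p.take_spec hb)
  rw [Walk.length_append] at h2
  have h3 : (p.dropUntil b hb).length ≠ 0 := by
    intro h0
    exact hbx (Walk.eq_of_length_eq_zero h0)
  omega

lemma adj_dist_ne (hT : T.IsTree) (r : V) {x b : V} (h : T.Adj x b) :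
    T.dist r x ≠ T.dist r b := by
  intro heq
  obtain ⟨p, hp, hlen⟩ := (hT.isConnected r x).exists_path_of_dist
  have hbs : b ∉ p.support := by
    intro hb
    rcases eq_or_ne b x with rfl | hbx
    · exact h.ne rfl
    · have := dist_lt_of_mem_support p hlen hb hbx
      omega
  have hw : (p.concat h).IsPath := by
    rw [← Walk.isPath_reverse_iff, Walk.reverse_concat]
    rw [Walk.cons_isPath_iff]
    exact ⟨hp.reverse, by simpa using hbs⟩
  obtain ⟨q, hq, hqlen⟩ := (hT.isConnected r b).exists_path_of_dist
  have := (hT.existsUnique_path r b).unique hw hq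
  have : (p.concat h).length = q.length := by rw [this]
  rw [Walk.length_concat] at this
  omega

lemma parent_unique (hT : T.IsTree) {x y b : V} (hx : T.Adj x b) (hy : T.Adj y b)
    (hdx : T.dist r x + 1 = T.dist r b) (hdy : T.dist r y + 1 = T.dist r b) : x = y := by
  obtain ⟨p, hp, hplen⟩ := (hT.isConnected r x).exists_path_of_dist
  obtain ⟨q, hq, hqlen⟩ := (hT.isConnected r y).exists_path_of_dist
  have hbp : b ∉ p.support := by
    intro hb
    rcases eq_or_ne b x with rfl | hbx
    · omega
    · have := dist_lt_of_mem_support p hplen hb hbx; omega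
  have hbq : b ∉ q.support := by
    intro hb
    rcases eq_or_ne b y with rfl | hby
    · omega
    · have := dist_lt_of_mem_support q hqlen hb hby; omega
  have hwp : (p.concat hx).IsPath := by
    rw [← Walk.isPath_reverse_iff, Walk.reverse_concat, Walk.cons_isPath_iff]
    exact ⟨hp.reverse, by simpa using hbp⟩
  have hwq : (q.concat hy).IsPath := by
    rw [← Walk.isPath_reverse_iff, Walk.reverse_concat, Walk.cons_isPath_iff]
    exact ⟨hq.reverse, by simpa using hbq⟩
  have heq := (hT.existsUnique_path r b).unique hwp hwq
  have := congrArg (fun w : T.Walk r b => w.reverse.getVert 1) heq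
  simpa [Walk.reverse_concat, Walk.getVert_cons_succ] using this


open scoped Classical in
noncomputable def par (T : SimpleGraph V) (r v : V) : V :=
  if h : ∃ u, T.Adj u v ∧ T.dist r u + 1 = T.dist r v then h.choose else v

omit [DecidableEq V] in
lemma par_exists (hc : T.Connected) {v : V} (hv : v ≠ r) :
    ∃ u, T.Adj u v ∧ T.dist r u + 1 = T.dist r v := by
  obtain ⟨p, hplen⟩ := (hc r v).exists_walk_length_eq_dist
  have hpos : p.length ≠ 0 := fun h0 => hv (Walk.eq_of_length_eq_zero h0).symm
  cases hq : p.reverse with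
  | nil => simp [← Walk.length_reverse, hq] at hpos
  | @cons _ u _ h q =>
    refine ⟨u, h.symm, ?_⟩
    have hq1 : q.length + 1 = T.dist r v := by
      have := congrArg Walk.length hq
      simp only [Walk.length_reverse, Walk.length_cons] at this
      omega
    have h1 : T.dist r u ≤ q.length := by
      simpa using SimpleGraph.dist_le q.reverse
    have h2 : T.dist r v ≤ T.dist r u + 1 := by
      obtain ⟨w, hwlen⟩ := (hc r u).exists_walk_length_eq_dist
      have := SimpleGraph.dist_le (w.concat h.symm)
      rwa [Walk.length_concat, hwlen] at this
    omega

omit [DecidableEq V] in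
lemma par_spec (hc : T.Connected) {v : V} (hv : v ≠ r) :
    T.Adj (par T r v) v ∧ T.dist r (par T r v) + 1 = T.dist r v := by
  rw [par, dif_pos (par_exists hc hv)]
  exact (par_exists hc hv).choose_spec

omit [DecidableEq V] in
lemma par_root : par T r r = r := by
  rw [par, dif_neg]
  rintro ⟨u, -, hu⟩
  rw [dist_self] at hu
  omega

omit [DecidableEq V] in
lemma dist_par_lt (hc : T.Connected) {v : V} (hv : v ≠ r) :
    T.dist r (par T r v) < T.dist r v := by
  have := (par_spec hc hv).2; omega

lemma par_eq_of (hT : T.IsTree) {x b : V} (hx : T.Adj x b)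
    (hd : T.dist r x + 1 = T.dist r b) : par T r b = x := by
  have hb : b ≠ r := by
    intro h; subst h; rw [dist_self] at hd; omega
  obtain ⟨h1, h2⟩ := par_spec hT.isConnected hb
  exact parent_unique hT h1 hx h2 hd

lemma adj_classify (hT : T.IsTree) (r : V) {b x : V} (h : T.Adj b x) :
    par T r x = b ∨ par T r b = x := by
  have hne := adj_dist_ne hT r h
  have h1 : T.dist r x ≤ T.dist r b + 1 := by
    obtain ⟨w, hwlen⟩ := (hT.isConnected r b).exists_walk_length_eq_dist
    have := SimpleGraph.dist_le (w.concat h)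
    rwa [Walk.length_concat, hwlen] at this
  have h2 : T.dist r b ≤ T.dist r x + 1 := by
    obtain ⟨w, hwlen⟩ := (hT.isConnected r x).exists_walk_length_eq_dist
    have := SimpleGraph.dist_le (w.concat h.symm)
    rwa [Walk.length_concat, hwlen] at this
  rcases lt_or_gt_of_ne hne with hlt | hgt
  · exact Or.inl (par_eq_of hT h (by omega))
  · exact Or.inr (par_eq_of hT h.symm (by omega))

omit [DecidableEq V] in
lemma ne_root_of_par_eq (hT : T.IsTree) {x b : V} (h : T.Adj b x) (hp : par T r x = b) :
    x ≠ r := by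
  intro hr; subst hr
  rw [par_root] at hp
  exact h.ne hp.symm



section X
variable [Fintype V] [DecidableRel T.Adj] {m : ℕ}

noncomputable def children (T : SimpleGraph V) [DecidableRel T.Adj] (r p : V) : Finset V :=
  T.neighborFinset p \ {par T r p}

lemma mem_children {p x : V} : x ∈ children T r p ↔ T.Adj p x ∧ x ≠ par T r p := by
  simp [children]

open scoped Classical in
noncomputable def sig (T : SimpleGraph V) [DecidableRel T.Adj] (r : V) {m : ℕ}
    (S : Finset (ZMod m)) (p : V) (c : ZMod m) : V → ZMod m :=
  if h : ∃ F : V → ZMod m, (∀ v ∈ children T r p, F v ∈ S.erase c) ∧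
      Set.InjOn F (children T r p) then h.choose else fun _ => 0

lemma sig_exists (S : Finset (ZMod m)) (p : V) (c : ZMod m)
    (h : (children T r p).card ≤ (S.erase c).card) :
    ∃ F : V → ZMod m, (∀ v ∈ children T r p, F v ∈ S.erase c) ∧
      Set.InjOn F (children T r p) := by
  have hcard : Fintype.card (children T r p) ≤ Fintype.card (S.erase c) := by
    simpa using h
  obtain ⟨e⟩ := Function.Embedding.nonempty_of_card_le hcard
  refine ⟨fun v => if hv : v ∈ children T r p then (e ⟨v, hv⟩ : ZMod m) else 0, ?_, ?_⟩
  · intro v hv; dsimp only; rw [dif_pos hv]; exact (e ⟨v, hv⟩).2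
  · intro v hv w hw hvw
    rw [Finset.mem_coe] at hv hw
    dsimp only at hvw
    rw [dif_pos hv, dif_pos hw] at hvw
    have := e.injective (Subtype.ext hvw)
    exact congrArg Subtype.val this

lemma sig_spec (S : Finset (ZMod m)) (p : V) (c : ZMod m)
    (h : (children T r p).card ≤ (S.erase c).card) :
    (∀ v ∈ children T r p, sig T r S p c v ∈ S.erase c) ∧
      Set.InjOn (sig T r S p c) (children T r p) := by
  have hEx := sig_exists (T := T) (r := r) S p c h
  rw [sig, dif_pos hEx]
  exact hEx.choose_spec


noncomputable def lab (T : SimpleGraph V) [DecidableRel T.Adj]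
    (hc : T.Connected) (r : V) (S : Finset (ZMod m)) (v : V) : ZMod m :=
  if h : v = r then 0 else
    sig T r S (par T r v) (- lab T hc r S (par T r v)) v
termination_by T.dist r v
decreasing_by exact dist_par_lt hc h

noncomputable def pot (T : SimpleGraph V) [DecidableRel T.Adj]
    (hc : T.Connected) (r : V) (S : Finset (ZMod m)) (v : V) : ZMod m :=
  if h : v = r then 0 else pot T hc r S (par T r v) + lab T hc r S v
termination_by T.dist r v
decreasing_by exact dist_par_lt hc h

variable (hc : T.Connected) (S : Finset (ZMod m))

lemma lab_root : lab T hc r S r = 0 := by rw [lab]; simp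

lemma lab_ne {v : V} (hv : v ≠ r) :
    lab T hc r S v = sig T r S (par T r v) (- lab T hc r S (par T r v)) v := by
  rw [lab]; simp [hv]

lemma pot_ne {v : V} (hv : v ≠ r) :
    pot T hc r S v = pot T hc r S (par T r v) + lab T hc r S v := by
  rw [pot]; simp [hv]

variable (hT : T.IsTree) (hS0 : (0 : ZMod m) ∉ S) (hSsym : ∀ s ∈ S, -s ∈ S)
  (hcard : T.maxDegree ≤ S.card)

include hT hS0 hSsym hcard

lemma cond_holds {p : V} (hlab : p ≠ r → lab T hc r S p ∈ S) :
    (children T r p).card ≤ (S.erase (- lab T hc r S p)).card := by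
  rcases eq_or_ne p r with hpr | hp
  · have h1 : (children T r p).card ≤ T.degree p := by
      apply Finset.card_le_card
      unfold children
      exact Finset.sdiff_subset
    have h2 : S.erase (- lab T hc r S p) = S := by
      rw [hpr, lab_root, neg_zero]
      exact Finset.erase_eq_of_notMem hS0
    rw [h2]
    exact h1.trans ((T.degree_le_maxDegree p).trans hcard)
  · have hparmem : par T r p ∈ T.neighborFinset p := by
      rw [mem_neighborFinset]
      exact ((par_spec hc hp).1).symm
    have h1 : (children T r p).card = T.degree p - 1 := by
      unfold children
      rw [Finset.card_sdiff_of_subset (by simpa using hparmem)]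
      rw [Finset.card_singleton]
      rfl
    have hmem := hlab hp
    have h2 : (- lab T hc r S p) ∈ S := hSsym _ hmem
    rw [Finset.card_erase_of_mem h2, h1]
    have := (T.degree_le_maxDegree p).trans hcard
    omega

lemma lab_mem_aux : ∀ n (v : V), T.dist r v ≤ n → v ≠ r → lab T hc r S v ∈ S := by
  intro n
  induction n with
  | zero =>
    intro v hd hv
    rw [Nat.le_zero] at hd
    exact absurd (((hc r v).dist_eq_zero_iff).mp hd).symm hv
  | succ n ih =>
    intro v hd hv
    have hspec := par_spec hc hv
    have hplab : par T r v ≠ r → lab T hc r S (par T r v) ∈ S :=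
      fun hpr => ih (par T r v) (by omega) hpr
    have hcond := cond_holds hc S hT hS0 hSsym hcard hplab
    have hsig := sig_spec (T := T) (r := r) S (par T r v) (- lab T hc r S (par T r v)) hcond
    have hvchild : v ∈ children T r (par T r v) := by
      rw [mem_children]
      refine ⟨hspec.1, ?_⟩
      rcases eq_or_ne (par T r v) r with hpr | hpr
      · rw [hpr, par_root]; exact hv
      · have h2 := (par_spec hc hpr).2
        intro hvpp
        rw [← hvpp] at h2
        omega
    have hms := hsig.1 v hvchild
    rw [lab_ne hc S hv]
    exact Finset.mem_of_mem_erase hms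

lemma lab_mem {v : V} (hv : v ≠ r) : lab T hc r S v ∈ S :=
  lab_mem_aux hc S hT hS0 hSsym hcard (T.dist r v) v le_rfl hv

lemma pot_adj_sub {b x : V} (hbx : T.Adj b x) (hpx : par T r x = b) :
    pot T hc r S x - pot T hc r S b = lab T hc r S x := by
  have hx : x ≠ r := ne_root_of_par_eq hT hbx hpx
  rw [pot_ne hc S hx, hpx]
  ring

lemma pot_adj_mem {b x : V} (hbx : T.Adj b x) :
    pot T hc r S x - pot T hc r S b ∈ S := by
  rcases adj_classify hT r hbx with hpx | hpb
  · rw [pot_adj_sub hc S hT hS0 hSsym hcard hbx hpx]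
    exact lab_mem hc S hT hS0 hSsym hcard (ne_root_of_par_eq hT hbx hpx)
  · have := pot_adj_sub hc S hT hS0 hSsym hcard hbx.symm hpb
    have h2 : pot T hc r S x - pot T hc r S b = - lab T hc r S b := by
      rw [← this]; ring
    rw [h2]
    exact hSsym _ (lab_mem hc S hT hS0 hSsym hcard (ne_root_of_par_eq hT hbx.symm hpb))

lemma pot_injOn (b : V) : Set.InjOn (pot T hc r S) (T.neighborSet b) := by
  intro x hx y hy hxy
  rw [mem_neighborSet] at hx hy
  by_contra hne
  -- classification
  have hplab : b ≠ r → lab T hc r S b ∈ S := fun hbr => lab_mem hc S hT hS0 hSsym hcard hbr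
  have hcond := cond_holds hc S hT hS0 hSsym hcard hplab
  have hsig := sig_spec (T := T) (r := r) S b (- lab T hc r S b) hcond
  have hchild : ∀ z : V, T.Adj b z → par T r z = b → z ∈ children T r b := by
    intro z hz hpz
    rw [mem_children]
    refine ⟨hz, ?_⟩
    intro hzpb
    -- z = par b and par z = b : distance contradiction
    have hzr : z ≠ r := ne_root_of_par_eq hT hz hpz
    have hbr : b ≠ r := by
      intro hbr; rw [hbr, par_root] at hzpb; exact hzr hzpb
    have h1 := (par_spec hc hzr).2
    have h2 := (par_spec hc hbr).2
    rw [hpz] at h1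
    rw [← hzpb] at h2
    omega
  have hlabchild : ∀ z : V, T.Adj b z → par T r z = b →
      lab T hc r S z ∈ S.erase (- lab T hc r S b) := by
    intro z hz hpz
    have hzr : z ≠ r := ne_root_of_par_eq hT hz hpz
    have := hsig.1 z (hchild z hz hpz)
    rwa [lab_ne hc S hzr, hpz]
  rcases adj_classify hT r hx with hpx | hpbx
  · rcases adj_classify hT r hy with hpy | hpby
    · -- both children of b
      have e1 := pot_adj_sub hc S hT hS0 hSsym hcard hx hpx
      have e2 := pot_adj_sub hc S hT hS0 hSsym hcard hy hpy
      have : lab T hc r S x = lab T hc r S y := by rw [← e1, ← e2, hxy]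
      have hxr : x ≠ r := ne_root_of_par_eq hT hx hpx
      have hyr : y ≠ r := ne_root_of_par_eq hT hy hpy
      have hxe := lab_ne hc S (r := r) (T := T) hxr
      have hye := lab_ne hc S (r := r) (T := T) hyr
      rw [hxe, hye, hpx, hpy] at this
      exact hne (hsig.2 (Finset.mem_coe.mpr (hchild x hx hpx))
        (Finset.mem_coe.mpr (hchild y hy hpy)) this)
    · -- x child of b, y = par b
      have e1 := pot_adj_sub hc S hT hS0 hSsym hcard hx hpx
      have e2 := pot_adj_sub hc S hT hS0 hSsym hcard hy.symm hpby
      have hlx := hlabchild x hx hpx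
      have : lab T hc r S x = - lab T hc r S b := by
        have : pot T hc r S x - pot T hc r S b = -(pot T hc r S b - pot T hc r S y) := by
          rw [hxy]; ring
        rw [e1, e2] at this
        rw [this]
      exact (Finset.ne_of_mem_erase hlx) this
  · rcases adj_classify hT r hy with hpy | hpby
    · -- y child, x = par b
      have e1 := pot_adj_sub hc S hT hS0 hSsym hcard hy hpy
      have e2 := pot_adj_sub hc S hT hS0 hSsym hcard hx.symm hpbx
      have hly := hlabchild y hy hpy
      have : lab T hc r S y = - lab T hc r S b := by
        have : pot T hc r S y - pot T hc r S b = -(pot T hc r S b - pot T hc r S x) := by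
          rw [hxy]; ring
        rw [e1, e2] at this
        rw [this]
      exact (Finset.ne_of_mem_erase hly) this
    · -- x = par b = y
      exact hne (hpbx ▸ hpby)


lemma pot_adj_ne {b x : V} (hbx : T.Adj b x) :
    pot T hc r S x ≠ pot T hc r S b := by
  intro h
  apply hS0
  have := pot_adj_mem (r := r) hc S hT hS0 hSsym hcard hbx
  rwa [h, sub_self] at this

end X

lemma exists_pot [Fintype V] [DecidableRel T.Adj] (hT : T.IsTree) {m : ℕ}
    (S : Finset (ZMod m)) (hS0 : (0 : ZMod m) ∉ S)
    (hSsym : ∀ s ∈ S, -s ∈ S) (hcard : T.maxDegree ≤ S.card) (r : V) :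
    ∃ f : V → ZMod m, (∀ b x, T.Adj b x → f x - f b ∈ S) ∧
      ∀ b : V, Set.InjOn f (T.neighborSet b) :=
  ⟨pot T hT.isConnected r S,
    fun _ _ h => pot_adj_mem hT.isConnected S hT hS0 hSsym hcard h,
    fun b => pot_injOn hT.isConnected S hT hS0 hSsym hcard b⟩

section Z
variable {k m : ℕ}

noncomputable def A (k m : ℕ) : Finset (ZMod m) :=
  (Finset.Icc 1 k ∪ Finset.Icc (3*k+1) (4*k)).image (fun a : ℕ => (a : ZMod m))

noncomputable def B (k m : ℕ) : Finset (ZMod m) :=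
  (Finset.Icc (k+1) (3*k)).image (fun a : ℕ => (a : ZMod m))

variable (hm : m = 4*k + 1)
include hm

lemma castinj {a b : ℕ} (ha : a < m) (hb : b < m) (h : ((a : ℕ) : ZMod m) = ((b : ℕ) : ZMod m)) :
    a = b := by
  haveI : NeZero m := ⟨by omega⟩
  rw [← ZMod.val_cast_of_lt ha, ← ZMod.val_cast_of_lt hb, h]

lemma castneg {a : ℕ} (ha : a ≤ m) :
    -((a : ℕ) : ZMod m) = ((m - a : ℕ) : ZMod m) := by
  have h1 : ((m - a : ℕ) : ZMod m) + ((a : ℕ) : ZMod m) = ((m : ℕ) : ZMod m) := by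
    rw [← Nat.cast_add]; congr 1; omega
  rw [ZMod.natCast_self] at h1
  exact (neg_eq_of_add_eq_zero_left h1)

lemma h0A : (0 : ZMod m) ∉ A k m := by
  intro h
  simp only [A, Finset.mem_image, Finset.mem_union, Finset.mem_Icc] at h
  obtain ⟨a, ha, h0⟩ := h
  have : a = 0 := castinj hm (by omega) (by omega) (by simpa using h0)
  omega

lemma h0B : (0 : ZMod m) ∉ B k m := by
  intro h
  simp only [B, Finset.mem_image, Finset.mem_Icc] at h
  obtain ⟨a, ha, h0⟩ := h
  have : a = 0 := castinj hm (by omega) (by omega) (by simpa using h0)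
  omega

lemma hsymA : ∀ s ∈ A k m, -s ∈ A k m := by
  intro s hs
  simp only [A, Finset.mem_image, Finset.mem_union, Finset.mem_Icc] at hs ⊢
  obtain ⟨a, ha, rfl⟩ := hs
  exact ⟨m - a, by omega, (castneg hm (by omega)).symm⟩

lemma hsymB : ∀ s ∈ B k m, -s ∈ B k m := by
  intro s hs
  simp only [B, Finset.mem_image, Finset.mem_Icc] at hs ⊢
  obtain ⟨a, ha, rfl⟩ := hs
  exact ⟨m - a, by omega, (castneg hm (by omega)).symm⟩

lemma hcardA : 2*k ≤ (A k m).card := by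
  have hinj : Set.InjOn (fun a : ℕ => (a : ZMod m))
      ((Finset.Icc 1 k ∪ Finset.Icc (3*k+1) (4*k)) : Finset ℕ) := by
    intro a ha b hb h
    simp only [Finset.coe_union, Set.mem_union, Finset.coe_Icc, Set.mem_Icc] at ha hb
    exact castinj hm (by omega) (by omega) h
  rw [A, Finset.card_image_of_injOn hinj,
    Finset.card_union_of_disjoint (by simp [Finset.disjoint_left]; omega)]
  rw [Nat.card_Icc, Nat.card_Icc]
  omega

lemma hcardB : 2*k ≤ (B k m).card := by
  have hinj : Set.InjOn (fun a : ℕ => (a : ZMod m))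
      ((Finset.Icc (k+1) (3*k)) : Finset ℕ) := by
    intro a ha b hb h
    simp only [Finset.coe_Icc, Set.mem_Icc] at ha hb
    exact castinj hm (by omega) (by omega) h
  rw [B, Finset.card_image_of_injOn hinj, Nat.card_Icc]
  omega

lemma hdisjAB : Disjoint (A k m) (B k m) := by
  rw [Finset.disjoint_left]
  intro s hsA hsB
  simp only [A, Finset.mem_image, Finset.mem_union, Finset.mem_Icc] at hsA
  simp only [B, Finset.mem_image, Finset.mem_Icc] at hsB
  obtain ⟨a, ha, rfl⟩ := hsA
  obtain ⟨b, hb, hba⟩ := hsB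
  have : b = a := castinj hm (by omega) (by omega) hba
  omega

end Z
end TreeSq


theorem tree_self_product_square_chromatic {V : Type*} [Fintype V]
    (T : SimpleGraph V) [DecidableRel T.Adj]
    (hT : T.IsTree) (hE : T.edgeSet.Nonempty) :
    (T □ T).square'.chromaticNumber ≤ ((1 + 4 * ((T.maxDegree + 1) / 2) : ℕ) : ℕ∞) ∧
      (1 + 4 * ((T.maxDegree + 1) / 2) : ℕ) ≤ 2 * T.maxDegree + 3 := by
  refine ⟨?_, by omega⟩
  classical
  have hAdj : ∃ u v, T.Adj u v := by
    obtain ⟨e, he⟩ := hE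
    induction e using Sym2.ind with
    | _ u v => exact ⟨u, v, he⟩
  obtain ⟨u₀, v₀, h₀⟩ := hAdj
  have hΔ : 1 ≤ T.maxDegree := by
    have h1 : 0 < T.degree u₀ := by rw [T.degree_pos_iff_exists_adj]; exact ⟨v₀, h₀⟩
    exact h1.trans_le (T.degree_le_maxDegree u₀)
  set k := (T.maxDegree + 1) / 2 with hk
  set m := 1 + 4 * k with hmdef
  have hm : m = 4 * k + 1 := by omega
  haveI : NeZero m := ⟨by omega⟩
  have hΔ2k : T.maxDegree ≤ 2 * k := by omega
  obtain ⟨f, hf1, hf2⟩ := TreeSq.exists_pot hT (TreeSq.A k m) (TreeSq.h0A hm)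
    (TreeSq.hsymA hm) (hΔ2k.trans (TreeSq.hcardA hm)) u₀
  obtain ⟨g, hg1, hg2⟩ := TreeSq.exists_pot hT (TreeSq.B k m) (TreeSq.h0B hm)
    (TreeSq.hsymB hm) (hΔ2k.trans (TreeSq.hcardB hm)) u₀
  have hdisj := TreeSq.hdisjAB (k := k) hm
  have C : (T □ T).square'.Coloring (ZMod m) := by
    refine SimpleGraph.Coloring.mk (fun p => f p.1 + g p.2) ?_
    rintro ⟨a1, a2⟩ ⟨b1, b2⟩ (⟨hne, hcase⟩ : _ ∧ _) heq
    dsimp only at heq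
    rcases hcase with hd | ⟨⟨w1, w2⟩, hw1, hw2⟩
    · rcases SimpleGraph.boxProd_adj.mp hd with ⟨h, h2⟩ | ⟨h, h2⟩
      · dsimp only at h h2
        rw [h2] at heq
        have hf : f b1 - f a1 = 0 := by
          have : f a1 = f b1 := by
            have := add_right_cancel heq
            exact this
          rw [this, sub_self]
        exact TreeSq.h0A hm (hf ▸ hf1 a1 b1 h)
      · dsimp only at h h2
        rw [h2] at heq
        have hg : g b2 - g a2 = 0 := by
          have : g a2 = g b2 := add_left_cancel heq
          rw [this, sub_self]
        exact TreeSq.h0B hm (hg ▸ hg1 a2 b2 h)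
    · rcases SimpleGraph.boxProd_adj.mp hw1 with ⟨h, h2⟩ | ⟨h, h2⟩ <;>
        rcases SimpleGraph.boxProd_adj.mp hw2 with ⟨h', h2'⟩ | ⟨h', h2'⟩ <;>
        dsimp only at h h2 h' h2'
      · -- both first coordinate
        have ha2b2 : a2 = b2 := h2.trans h2'
        rw [ha2b2] at heq
        have hfa : f a1 = f b1 := add_right_cancel heq
        have : a1 = b1 := hf2 w1 h.symm h' hfa
        exact hne (Prod.ext this ha2b2)
      · -- first then second
        have e1 : f a1 - f w1 ∈ TreeSq.A k m := hf1 w1 a1 h.symm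
        have e2 : g b2 - g w2 ∈ TreeSq.B k m := hg1 w2 b2 h'
        have hga : g a2 = g w2 := by rw [h2]
        have hfw : f w1 = f b1 := by rw [h2']
        have hkey : f a1 - f w1 = g b2 - g w2 := by
          linear_combination heq - hga - hfw
        rw [hkey] at e1
        exact (Finset.disjoint_left.mp hdisj e1) e2
      · -- second then first
        have e1 : f b1 - f w1 ∈ TreeSq.A k m := hf1 w1 b1 h'
        have e2 : g a2 - g w2 ∈ TreeSq.B k m := hg1 w2 a2 h.symm
        have hfa : f a1 = f w1 := by rw [h2]
        have hgb : g b2 = g w2 := by rw [← h2']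
        have hkey : g a2 - g w2 = f b1 - f w1 := by
          linear_combination heq - hfa + hgb
        rw [hkey] at e2
        exact (Finset.disjoint_left.mp hdisj e1) e2
      · -- both second coordinate
        have ha1b1 : a1 = b1 := h2.trans h2'
        rw [ha1b1] at heq
        have hga : g a2 = g b2 := add_left_cancel heq
        have : a2 = b2 := hg2 w2 h.symm h' hga
        exact hne (Prod.ext ha1b1 this)
  have hcol : (T □ T).square'.Colorable m := by
    have := C.colorable
    rwa [ZMod.card] at this
  exact hcol.chromaticNumber_le
end

section
/- Let T be a finite tree with at least 3 vertices, v a leaf of T with unique neighbour w, and s ≥ 0 an integer. Suppose c is a proper colouring of (T−v)² in which every edge of T−v has span in [s+1, s+⌈Δ(T)/2⌉]. Then there exists an integer x with s+1 ≤ |x| ≤ s+⌈Δ(T)/2⌉ such that no neighbour of w in T−v is coloured c(w)+x; moreover, setting c(v) := c(w)+x extends c to a proper colouring of T² in which every edge of T has span in [s+1, s+⌈Δ(T)/2⌉]. -/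
theorem tree_leaf_extension {V : Type*} [Fintype V]
    (T : SimpleGraph V) [DecidableRel T.Adj] (hT : T.IsTree)
    (hcard : 3 ≤ Fintype.card V)
    (v w : V) (hleaf : T.degree v = 1) (hvw : T.Adj v w) (s : ℕ)
    (c : ({v}ᶜ : Set V) → ℤ)
    (hc : ∀ x y, (T.induce ({v}ᶜ : Set V)).square'.Adj x y → c x ≠ c y)
    (hspan : ∀ x y, (T.induce ({v}ᶜ : Set V)).Adj x y →
      (s : ℤ) + 1 ≤ |c x - c y| ∧ |c x - c y| ≤ (s : ℤ) + ((T.maxDegree + 1) / 2 : ℕ)) :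
    ∃ x : ℤ, ((s : ℤ) + 1 ≤ |x| ∧ |x| ≤ (s : ℤ) + ((T.maxDegree + 1) / 2 : ℕ)) ∧
      (∀ u : ({v}ᶜ : Set V), T.Adj w u →
        c u ≠ c ⟨w, Set.mem_compl_singleton_iff.mpr hvw.ne'⟩ + x) ∧
      ∃ c' : V → ℤ,
        (∀ u (h : u ∈ ({v}ᶜ : Set V)), c' u = c ⟨u, h⟩) ∧
        c' v = c ⟨w, Set.mem_compl_singleton_iff.mpr hvw.ne'⟩ + x ∧
        (∀ x y, T.square'.Adj x y → c' x ≠ c' y) ∧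
        (∀ x y, T.Adj x y →
          (s : ℤ) + 1 ≤ |c' x - c' y| ∧
          |c' x - c' y| ≤ (s : ℤ) + ((T.maxDegree + 1) / 2 : ℕ)) := by
  classical
  have hwmem : w ∈ ({v}ᶜ : Set V) := Set.mem_compl_singleton_iff.mpr hvw.ne'
  set cw : ℤ := c ⟨w, hwmem⟩ with hcw
  set k : ℕ := (T.maxDegree + 1) / 2 with hk
  -- the unique neighbour of v is w
  have hNv : T.neighborFinset v = {w} := by
    obtain ⟨a, ha⟩ := Finset.card_eq_one.mp hleaf
    have hw : w ∈ T.neighborFinset v := by simpa using hvw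
    rw [ha] at hw ⊢
    simpa using (Finset.mem_singleton.mp hw).symm
  have hadj_v : ∀ y, T.Adj v y → y = w := by
    intro y hy
    have : y ∈ T.neighborFinset v := by simpa using hy
    rw [hNv] at this; simpa using this
  have hΔ1 : 1 ≤ T.maxDegree := hleaf ▸ T.degree_le_maxDegree v
  have hdegw : T.degree w ≤ T.maxDegree := T.degree_le_maxDegree w
  -- candidate set
  set S : Finset ℤ :=
    Finset.Icc ((s : ℤ) + 1) ((s : ℤ) + k) ∪ Finset.Icc (-((s : ℤ) + k)) (-((s : ℤ) + 1))
    with hS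
  have hScard : S.card = 2 * k := by
    rw [hS, Finset.card_union_of_disjoint, Int.card_Icc, Int.card_Icc]
    · omega
    · rw [Finset.disjoint_left]
      intro a ha hb
      simp only [Finset.mem_Icc] at ha hb
      omega
  -- bad set
  set N : Finset V := (T.neighborFinset w).erase v with hN
  set B : Finset ℤ := N.attach.image
    (fun u => c ⟨u.1, Set.mem_compl_singleton_iff.mpr (Finset.ne_of_mem_erase u.2)⟩ - cw)
    with hB
  have hBcard : B.card < S.card := by
    have h1 : B.card ≤ N.card := (Finset.card_image_le).trans (by simp)
    have h2 : N.card = T.degree w - 1 := by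
      rw [hN, Finset.card_erase_of_mem (by simpa using hvw.symm)]
      rfl
    have h3 : 1 ≤ T.degree w := by
      have : v ∈ T.neighborFinset w := by simpa using hvw.symm
      have := Finset.card_pos.mpr ⟨v, this⟩
      exact this
    rw [hScard]
    omega
  obtain ⟨x, hxS, hxB⟩ : ∃ x ∈ S, x ∉ B := by
    by_contra h
    push_neg at h
    exact absurd (Finset.card_le_card h) (not_le.mpr hBcard)
  have hxS' : ((s : ℤ) + 1 ≤ x ∧ x ≤ (s : ℤ) + k) ∨
      (-((s : ℤ) + k) ≤ x ∧ x ≤ -((s : ℤ) + 1)) := by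
    rcases Finset.mem_union.mp hxS with h | h <;> [left; right] <;>
      simpa using Finset.mem_Icc.mp h
  have habs1 : (s : ℤ) + 1 ≤ |x| := by
    rcases hxS' with ⟨h1, _⟩ | ⟨_, h2⟩
    · exact le_abs.mpr (Or.inl h1)
    · exact le_abs.mpr (Or.inr (by omega))
  have habs2 : |x| ≤ (s : ℤ) + k := by
    rcases hxS' with ⟨h1, h2⟩ | ⟨h1, h2⟩ <;> exact abs_le.mpr ⟨by omega, by omega⟩
  have hx0 : x ≠ 0 := by
    intro h; rw [h] at habs1; simp at habs1; omega
  -- key property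
  have hkey : ∀ u : ({v}ᶜ : Set V), T.Adj w u → c u ≠ cw + x := by
    rintro ⟨u, hu⟩ hadj heq
    apply hxB
    have huv : u ≠ v := Set.mem_compl_singleton_iff.mp hu
    have humem : u ∈ N := Finset.mem_erase.mpr ⟨huv, by simpa using hadj⟩
    rw [hB, Finset.mem_image]
    refine ⟨⟨u, humem⟩, Finset.mem_attach _ _, ?_⟩
    simp only
    rw [show (⟨u, Set.mem_compl_singleton_iff.mpr
      (Finset.ne_of_mem_erase humem)⟩ : ({v}ᶜ : Set V)) = ⟨u, hu⟩ from rfl, heq]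
    ring
  refine ⟨x, ⟨habs1, habs2⟩, hkey, ?_⟩
  set c' : V → ℤ := fun u =>
    if h : u = v then cw + x else c ⟨u, Set.mem_compl_singleton_iff.mpr h⟩ with hc'
  have hc'v : c' v = cw + x := by simp [hc']
  have hc'ne : ∀ u (h : u ∈ ({v}ᶜ : Set V)), c' u = c ⟨u, h⟩ := by
    intro u h
    have huv : u ≠ v := Set.mem_compl_singleton_iff.mp h
    simp [hc', huv]
  have hc'w : c' w = cw := hc'ne w hwmem
  -- adjacency to v in the square means w or a neighbour of w
  have hsq_v : ∀ b, T.square'.Adj v b → b = w ∨ (b ≠ v ∧ T.Adj w b) := by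
    rintro b ⟨hne, h | ⟨m, h1, h2⟩⟩
    · exact Or.inl (hadj_v b h)
    · have := hadj_v m h1
      subst this
      exact Or.inr ⟨hne.symm, h2⟩
  -- properness of c'
  have hproper : ∀ a b, T.square'.Adj a b → c' a ≠ c' b := by
    have main : ∀ b, T.square'.Adj v b → c' v ≠ c' b := by
      intro b hvb
      rcases hsq_v b hvb with rfl | ⟨hbv, hwb⟩
      · rw [hc'v, hc'w]
        intro h; apply hx0; omega
      · rw [hc'v, hc'ne b (Set.mem_compl_singleton_iff.mpr hbv)]
        exact fun h => hkey ⟨b, _⟩ hwb h.symm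
    intro a b hab
    by_cases ha : a = v
    · subst ha; exact main b hab
    · by_cases hb : b = v
      · subst hb; exact fun h => main a hab.symm h.symm
      · -- both in the complement
        have hainduce : (T.induce ({v}ᶜ : Set V)).square'.Adj
            ⟨a, Set.mem_compl_singleton_iff.mpr ha⟩
            ⟨b, Set.mem_compl_singleton_iff.mpr hb⟩ := by
          obtain ⟨hne, h | ⟨m, h1, h2⟩⟩ := hab
          · exact ⟨fun hh => hne (congrArg Subtype.val hh), Or.inl h⟩
          · by_cases hm : m = v
            · subst hm
              have := hadj_v a h1.symm
              have := hadj_v b h2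
              subst_vars
              exact absurd rfl hne
            · exact ⟨fun hh => hne (congrArg Subtype.val hh),
                Or.inr ⟨⟨m, Set.mem_compl_singleton_iff.mpr hm⟩, h1, h2⟩⟩
        rw [hc'ne a (Set.mem_compl_singleton_iff.mpr ha), hc'ne b (Set.mem_compl_singleton_iff.mpr hb)]
        exact hc _ _ hainduce
  refine ⟨c', hc'ne, hc'v, hproper, ?_⟩
  intro a b hab
  by_cases ha : a = v
  · subst ha
    have hbw := hadj_v b hab
    subst hbw
    rw [hc'v, hc'w, show cw + x - cw = x by ring]
    exact ⟨habs1, habs2⟩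
  · by_cases hb : b = v
    · subst hb
      have haw := hadj_v a hab.symm
      subst haw
      rw [hc'v, hc'w]
      rw [show cw - (cw + x) = -x by ring, abs_neg]
      exact ⟨habs1, habs2⟩
    · have : (T.induce ({v}ᶜ : Set V)).Adj
          ⟨a, Set.mem_compl_singleton_iff.mpr ha⟩
          ⟨b, Set.mem_compl_singleton_iff.mpr hb⟩ := hab
      rw [hc'ne a (Set.mem_compl_singleton_iff.mpr ha), hc'ne b (Set.mem_compl_singleton_iff.mpr hb)]
      exact hspan _ _ this
end
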